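/- arXiv:2302.03505 — 3 statements merged into one kernel-verified Lean document; each statement's English description precedes it below -/
import Mathlib

section
/- For the fixed-length binning scheme, the variance of the OPORP inner product estimator â = Σ_j x_j y_j equals (s-1) Σ_i u_i^2 v_i^2 + (1/k)·((D-k)/(D-1))·(a^2 + Σ_i u_i^2 · Σ_i v_i^2 − 2 Σ_i u_i^2 v_i^2), where a = Σ_i u_i v_i. -/
open MeasureTheory ProbabilityTheory
open scoped ENNReal

namespace OPORPaux

lemma ennhalf : (1:ℝ≥0∞)/1 = 1/2 + 1/2 := by
  rw [ENNReal.div_add_div_same]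
  exact ((ENNReal.div_eq_div_iff two_ne_zero ENNReal.ofNat_ne_top one_ne_zero
    ENNReal.one_ne_top).mpr (by norm_num))

lemma ennquarter : (1:ℝ≥0∞)/2 = 1/4 + 1/4 := by
  rw [ENNReal.div_add_div_same]
  exact ((ENNReal.div_eq_div_iff (by norm_num) (by norm_num) two_ne_zero
    ENNReal.ofNat_ne_top).mpr (by norm_num))

variable {Ω : Type*} [MeasurableSpace Ω] {μ : Measure Ω} [IsProbabilityMeasure μ]

lemma intmul {f g : Ω → ℝ} (hf : MemLp f 2 μ) (hg : MemLp g 2 μ) :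
    Integrable (fun ω => f ω * g ω) μ := by
  have h : MemLp (f • g) 1 μ := by
    haveI : ENNReal.HolderTriple 2 2 1 := ⟨by simpa only [one_div] using ennhalf.symm⟩
    exact hg.smul hf
  rw [memLp_one_iff_integrable] at h
  exact h

lemma mulL2 {f g : Ω → ℝ} (hf : MemLp f 4 μ) (hg : MemLp g 4 μ) :
    MemLp (fun ω => f ω * g ω) 2 μ := by
  have h : MemLp (f • g) 2 μ := by
    haveI : ENNReal.HolderTriple 4 4 2 := ⟨by simpa only [one_div] using ennquarter.symm⟩
    exact hg.smul hf
  exact h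

variable {D : ℕ} {r : Fin D → Ω → ℝ} {s : ℝ}

lemma lemB (hrmeas : ∀ i, Measurable (r i))
    (hindep : iIndepFun r μ)
    (φ : Fin D → ℝ → ℝ) (hφ : ∀ i, Measurable (φ i)) (t : Finset (Fin D)) :
    ∫ ω, ∏ i ∈ t, φ i (r i ω) ∂μ = ∏ i ∈ t, ∫ ω, φ i (r i ω) ∂μ := by
  classical
  induction t using Finset.induction_on with
  | empty => simp
  | @insert a t ha ih =>
    have hcomp : iIndepFun
        (fun i => φ i ∘ r i) μ := hindep.comp φ hφ
    have hmeas : ∀ i, Measurable (φ i ∘ r i) := fun i => (hφ i).comp (hrmeas i)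
    have hind : IndepFun (φ a ∘ r a) (∏ j ∈ t, (φ j ∘ r j)) μ :=
      (hcomp.indepFun_finset_prod_of_notMem hmeas ha).symm
    have hprodeq : (∏ j ∈ t, (φ j ∘ r j)) = fun ω => ∏ j ∈ t, φ j (r j ω) := by
      ext ω; simp [Finset.prod_apply]
    rw [hprodeq] at hind
    have h1 := hind.integral_mul_eq_mul_integral (hmeas a).aestronglyMeasurable
      (Finset.measurable_prod t (fun j _ => hmeas j)).aestronglyMeasurable
    simp only [Finset.prod_insert ha]
    rw [← ih]; exact h1

lemma measIf (a : Fin D) (n : ℕ) (l : Fin D) :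
    Measurable (fun x : ℝ => if l = a then x ^ n else x) := by
  by_cases h : l = a
  · simpa [h] using (measurable_id.pow_const n : Measurable fun x : ℝ => x ^ n)
  · simpa [h] using (measurable_id' : Measurable fun x : ℝ => x)

lemma memL2 (hL4 : ∀ i, MemLp (r i) 4 μ) (i : Fin D) : MemLp (r i) 2 μ :=
  (hL4 i).mono_exponent (by norm_num)

lemma memL2sq (hL4 : ∀ i, MemLp (r i) 4 μ) (i : Fin D) :
    MemLp (fun ω => (r i ω) ^ 2) 2 μ := by
  have h := mulL2 (hL4 i) (hL4 i)
  have e : (fun ω => r i ω * r i ω) = fun ω => (r i ω) ^ 2 := by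
    funext ω; ring
  rwa [e] at h

lemma memL2mul (hL4 : ∀ i, MemLp (r i) 4 μ) (i j : Fin D) :
    MemLp (fun ω => r i ω * r j ω) 2 μ :=
  mulL2 (hL4 i) (hL4 j)

lemma intr (hL4 : ∀ i, MemLp (r i) 4 μ) (i : Fin D) : Integrable (r i) μ :=
  (hL4 i).integrable (by norm_num)

lemma intmul2 (hL4 : ∀ i, MemLp (r i) 4 μ) (i j : Fin D) :
    Integrable (fun ω => r i ω * r j ω) μ :=
  intmul (memL2 hL4 i) (memL2 hL4 j)

lemma intsq (hL4 : ∀ i, MemLp (r i) 4 μ) (i : Fin D) :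
    Integrable (fun ω => (r i ω) ^ 2) μ :=
  (memL2 hL4 i).integrable_sq

lemma intpow4 (hL4 : ∀ i, MemLp (r i) 4 μ) (i : Fin D) :
    Integrable (fun ω => (r i ω) ^ 4) μ := by
  have h := intmul (memL2sq hL4 i) (memL2sq hL4 i)
  have e : (fun ω => (r i ω) ^ 2 * (r i ω) ^ 2) = fun ω => (r i ω) ^ 4 := by
    funext ω; ring
  rwa [e] at h

lemma intsqsq (hL4 : ∀ i, MemLp (r i) 4 μ) (i j : Fin D) :
    Integrable (fun ω => (r i ω) ^ 2 * (r j ω) ^ 2) μ :=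
  intmul (memL2sq hL4 i) (memL2sq hL4 j)

lemma intsqmul (hL4 : ∀ i, MemLp (r i) 4 μ) (i j l : Fin D) :
    Integrable (fun ω => (r i ω) ^ 2 * (r j ω * r l ω)) μ :=
  intmul (memL2sq hL4 i) (memL2mul hL4 j l)

lemma Epair (hrmeas : ∀ i, Measurable (r i))
    (hindep : iIndepFun r μ)
    (hm1 : ∀ i, ∫ ω, r i ω ∂μ = 0) {a b : Fin D} (h : a ≠ b) :
    ∫ ω, r a ω * r b ω ∂μ = 0 := by
  have hB := lemB hrmeas hindep (fun _ x => x) (fun _ => measurable_id) {a, b}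
  simp only [Finset.prod_pair h] at hB
  rw [hB, hm1 a, zero_mul]

lemma E2sq (hrmeas : ∀ i, Measurable (r i))
    (hindep : iIndepFun r μ)
    (hm2 : ∀ i, ∫ ω, (r i ω) ^ 2 ∂μ = 1) {a b : Fin D} (h : a ≠ b) :
    ∫ ω, (r a ω) ^ 2 * (r b ω) ^ 2 ∂μ = 1 := by
  have hB := lemB hrmeas hindep (fun _ x => x ^ 2)
    (fun _ => measurable_id.pow_const 2) {a, b}
  simp only [Finset.prod_pair h] at hB
  rw [hB, hm2 a, hm2 b, mul_one]

lemma E31 (hrmeas : ∀ i, Measurable (r i))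
    (hindep : iIndepFun r μ)
    (hm1 : ∀ i, ∫ ω, r i ω ∂μ = 0) {a b : Fin D} (h : a ≠ b) :
    ∫ ω, (r a ω) ^ 3 * r b ω ∂μ = 0 := by
  have hB := lemB hrmeas hindep (fun l x => if l = a then x ^ 3 else x)
    (measIf a 3) {a, b}
  simp only [Finset.prod_pair h, if_neg (Ne.symm h), eq_self_iff_true, if_true] at hB
  rw [hB, hm1 b, mul_zero]

lemma E3 (hrmeas : ∀ i, Measurable (r i))
    (hindep : iIndepFun r μ)
    (hm1 : ∀ i, ∫ ω, r i ω ∂μ = 0) {a b c : Fin D}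
    (hab : a ≠ b) (hac : a ≠ c) (hbc : b ≠ c) :
    ∫ ω, (r a ω) ^ 2 * (r b ω * r c ω) ∂μ = 0 := by
  have hB := lemB hrmeas hindep (fun l x => if l = a then x ^ 2 else x)
    (measIf a 2) {a, b, c}
  have hna : a ∉ ({b, c} : Finset (Fin D)) := by simp [hab, hac]
  simp only [show ({a, b, c} : Finset (Fin D)) = insert a {b, c} from rfl,
    Finset.prod_insert hna, Finset.prod_pair hbc,
    if_neg (Ne.symm hab), if_neg (Ne.symm hac), eq_self_iff_true, if_true] at hB
  rw [hB, hm1 b, zero_mul, mul_zero]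

lemma E4 (hrmeas : ∀ i, Measurable (r i))
    (hindep : iIndepFun r μ)
    (hm1 : ∀ i, ∫ ω, r i ω ∂μ = 0) {a b c d : Fin D}
    (hab : a ≠ b) (hac : a ≠ c) (had : a ≠ d)
    (hbc : b ≠ c) (hbd : b ≠ d) (hcd : c ≠ d) :
    ∫ ω, r a ω * r b ω * (r c ω * r d ω) ∂μ = 0 := by
  have hB := lemB hrmeas hindep (fun _ x => x) (fun _ => measurable_id) {a, b, c, d}
  have hna : a ∉ ({b, c, d} : Finset (Fin D)) := by simp [hab, hac, had]
  have hnb : b ∉ ({c, d} : Finset (Fin D)) := by simp [hbc, hbd]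
  simp only [show ({a, b, c, d} : Finset (Fin D)) = insert a (insert b {c, d}) from rfl,
    Finset.prod_insert hna, Finset.prod_insert hnb, Finset.prod_pair hcd] at hB
  rw [show (fun ω => r a ω * r b ω * (r c ω * r d ω))
      = fun ω => r a ω * (r b ω * (r c ω * r d ω)) from funext fun ω => by ring]
  rw [hB, hm1 a, zero_mul]


lemma E_diag_diag (hrmeas : ∀ i, Measurable (r i))
    (hindep : iIndepFun r μ)
    (hL4 : ∀ i, MemLp (r i) 4 μ)
    (hm2 : ∀ i, ∫ ω, (r i ω) ^ 2 ∂μ = 1)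
    (hm4 : ∀ i, ∫ ω, (r i ω) ^ 4 ∂μ = s) (i j : Fin D) :
    ∫ ω, ((r i ω) ^ 2 - 1) * ((r j ω) ^ 2 - 1) ∂μ
      = if i = j then s - 1 else 0 := by
  by_cases hij : i = j
  · subst hij
    rw [if_pos rfl]
    rw [show (fun ω => ((r i ω) ^ 2 - 1) * ((r i ω) ^ 2 - 1))
        = fun ω => (r i ω) ^ 4 - 2 * (r i ω) ^ 2 + 1 from funext fun ω => by ring]
    have hA : Integrable (fun ω => (r i ω) ^ 4 - 2 * (r i ω) ^ 2) μ :=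
      (intpow4 hL4 i).sub ((intsq hL4 i).const_mul 2)
    have hB2 : Integrable (fun ω => 2 * (r i ω) ^ 2) μ := (intsq hL4 i).const_mul 2
    rw [integral_add hA (integrable_const 1),
      integral_sub (intpow4 hL4 i) hB2,
      integral_const_mul, hm4 i, hm2 i, integral_const]
    simp only [measure_univ, probReal_univ, ENNReal.toReal_one, smul_eq_mul, mul_one, one_smul]
    ring
  · rw [if_neg hij]
    rw [show (fun ω => ((r i ω) ^ 2 - 1) * ((r j ω) ^ 2 - 1))
        = fun ω => (r i ω) ^ 2 * (r j ω) ^ 2 - (r i ω) ^ 2 - (r j ω) ^ 2 + 1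
        from funext fun ω => by ring]
    have hA : Integrable (fun ω => (r i ω) ^ 2 * (r j ω) ^ 2 - (r i ω) ^ 2) μ :=
      (intsqsq hL4 i j).sub (intsq hL4 i)
    have hB2 : Integrable (fun ω => (r i ω) ^ 2 * (r j ω) ^ 2 - (r i ω) ^ 2 - (r j ω) ^ 2) μ :=
      hA.sub (intsq hL4 j)
    rw [integral_add hB2 (integrable_const 1),
      integral_sub hA (intsq hL4 j),
      integral_sub (intsqsq hL4 i j) (intsq hL4 i),
      E2sq hrmeas hindep hm2 hij, hm2 i, hm2 j, integral_const]
    simp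

lemma E_diag_off (hrmeas : ∀ i, Measurable (r i))
    (hindep : iIndepFun r μ)
    (hL4 : ∀ i, MemLp (r i) 4 μ)
    (hm1 : ∀ i, ∫ ω, r i ω ∂μ = 0)
    (hm3 : ∀ i, ∫ ω, (r i ω) ^ 3 ∂μ = 0)
    {i j₁ j₂ : Fin D} (hj : j₁ ≠ j₂) :
    ∫ ω, ((r i ω) ^ 2 - 1) * (r j₁ ω * r j₂ ω) ∂μ = 0 := by
  rw [show (fun ω => ((r i ω) ^ 2 - 1) * (r j₁ ω * r j₂ ω))
      = fun ω => (r i ω) ^ 2 * (r j₁ ω * r j₂ ω) - r j₁ ω * r j₂ ω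
      from funext fun ω => by ring]
  rw [integral_sub (intsqmul hL4 i j₁ j₂) (intmul2 hL4 j₁ j₂),
    Epair hrmeas hindep hm1 hj, sub_zero]
  by_cases h1 : i = j₁
  · subst h1
    rw [show (fun ω => (r i ω) ^ 2 * (r i ω * r j₂ ω))
        = fun ω => (r i ω) ^ 3 * r j₂ ω from funext fun ω => by ring]
    exact E31 hrmeas hindep hm1 hj
  · by_cases h2 : i = j₂
    · subst h2
      rw [show (fun ω => (r i ω) ^ 2 * (r j₁ ω * r i ω))
          = fun ω => (r i ω) ^ 3 * r j₁ ω from funext fun ω => by ring]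
      exact E31 hrmeas hindep hm1 (Ne.symm hj)
    · exact E3 hrmeas hindep hm1 h1 h2 hj

lemma E_off_off (hrmeas : ∀ i, Measurable (r i))
    (hindep : iIndepFun r μ)
    (hm1 : ∀ i, ∫ ω, r i ω ∂μ = 0)
    (hm2 : ∀ i, ∫ ω, (r i ω) ^ 2 ∂μ = 1)
    {i₁ i₂ j₁ j₂ : Fin D} (hi : i₁ ≠ i₂) (hj : j₁ ≠ j₂) :
    ∫ ω, r i₁ ω * r i₂ ω * (r j₁ ω * r j₂ ω) ∂μ
      = if (i₁ = j₁ ∧ i₂ = j₂) ∨ (i₁ = j₂ ∧ i₂ = j₁) then 1 else 0 := by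
  by_cases h11 : i₁ = j₁
  · subst h11
    by_cases h22 : i₂ = j₂
    · subst h22
      rw [if_pos (Or.inl ⟨rfl, rfl⟩)]
      rw [show (fun ω => r i₁ ω * r i₂ ω * (r i₁ ω * r i₂ ω))
          = fun ω => (r i₁ ω) ^ 2 * (r i₂ ω) ^ 2 from funext fun ω => by ring]
      exact E2sq hrmeas hindep hm2 hi
    · -- i₁ = j₁, i₂ ≠ j₂ : zero
      have hcond : ¬((i₁ = i₁ ∧ i₂ = j₂) ∨ (i₁ = j₂ ∧ i₂ = i₁)) := by
        rintro (⟨-, h⟩ | ⟨h1, h2⟩)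
        · exact h22 h
        · exact hi h2.symm
      rw [if_neg hcond]
      rw [show (fun ω => r i₁ ω * r i₂ ω * (r i₁ ω * r j₂ ω))
          = fun ω => (r i₁ ω) ^ 2 * (r i₂ ω * r j₂ ω) from funext fun ω => by ring]
      exact E3 hrmeas hindep hm1 hi hj h22
  · by_cases h12 : i₁ = j₂
    · subst h12
      by_cases h21 : i₂ = j₁
      · subst h21
        rw [if_pos (Or.inr ⟨rfl, rfl⟩)]
        rw [show (fun ω => r i₁ ω * r i₂ ω * (r i₂ ω * r i₁ ω))
            = fun ω => (r i₁ ω) ^ 2 * (r i₂ ω) ^ 2 from funext fun ω => by ring]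
        exact E2sq hrmeas hindep hm2 hi
      · have hcond : ¬((i₁ = j₁ ∧ i₂ = i₁) ∨ (i₁ = i₁ ∧ i₂ = j₁)) := by
          rintro (⟨h1, -⟩ | ⟨-, h2⟩)
          · exact h11 h1
          · exact h21 h2
        rw [if_neg hcond]
        rw [show (fun ω => r i₁ ω * r i₂ ω * (r j₁ ω * r i₁ ω))
            = fun ω => (r i₁ ω) ^ 2 * (r i₂ ω * r j₁ ω) from funext fun ω => by ring]
        exact E3 hrmeas hindep hm1 hi h11 h21
    · have hcond : ¬((i₁ = j₁ ∧ i₂ = j₂) ∨ (i₁ = j₂ ∧ i₂ = j₁)) := by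
        rintro (⟨h1, -⟩ | ⟨h2, -⟩)
        · exact h11 h1
        · exact h12 h2
      rw [if_neg hcond]
      by_cases h21 : i₂ = j₁
      · subst h21
        rw [show (fun ω => r i₁ ω * r i₂ ω * (r i₂ ω * r j₂ ω))
            = fun ω => (r i₂ ω) ^ 2 * (r i₁ ω * r j₂ ω) from funext fun ω => by ring]
        exact E3 hrmeas hindep hm1 (Ne.symm hi) hj h12
      · by_cases h22 : i₂ = j₂
        · subst h22
          rw [show (fun ω => r i₁ ω * r i₂ ω * (r j₁ ω * r i₂ ω))
              = fun ω => (r i₂ ω) ^ 2 * (r i₁ ω * r j₁ ω) from funext fun ω => by ring]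
          exact E3 hrmeas hindep hm1 (Ne.symm hi) (Ne.symm hj) h11
        · exact E4 hrmeas hindep hm1 hi h11 h12 h21 h22 hj


section Combinatorics

lemma sum_indicator {k A : ℕ} (hA : A < k) :
    ∑ c : Fin k, (if A = (c : ℕ) then (1:ℝ) else 0) = 1 := by
  rw [Finset.sum_eq_single (⟨A, hA⟩ : Fin k)]
  · simp
  · intro b _ hb
    rw [if_neg]
    exact fun h => hb (Fin.ext h.symm)
  · exact fun h => absurd (Finset.mem_univ _) h

lemma sum_ind {k A B : ℕ} (hA : A < k) :
    ∑ j : Fin k, (if A = (j:ℕ) then (1:ℝ) else 0) * (if B = (j:ℕ) then (1:ℝ) else 0)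
      = if A = B then 1 else 0 := by
  rw [Finset.sum_eq_single (⟨A, hA⟩ : Fin k)]
  · simp [eq_comm]
  · intro b _ hb
    rw [if_neg fun h => hb (Fin.ext h.symm), zero_mul]
  · exact fun h => absurd (Finset.mem_univ _) h

lemma exists_sigma {D : ℕ} {i i' j j' : Fin D} (h : i ≠ i') (h' : j ≠ j') :
    ∃ σ : Equiv.Perm (Fin D), σ i = j ∧ σ i' = j' := by
  classical
  set τ := Equiv.swap i j with hτ
  have hτi : τ i = j := Equiv.swap_apply_left i j
  have h1 : j ≠ τ i' := by
    intro hc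
    exact h (τ.injective (by rw [hτi, hc]))
  refine ⟨τ.trans (Equiv.swap (τ i') j'), ?_, ?_⟩
  · simp only [Equiv.trans_apply, hτi]
    exact Equiv.swap_apply_of_ne_of_ne h1 h'
  · simp only [Equiv.trans_apply]
    exact Equiv.swap_apply_left _ _

lemma bincount {D k m : ℕ} (hm : 0 < m) (hDkm : D = k * m) :
    ∑ p : Fin D × Fin D, (if ((p.1:ℕ)/m = (p.2:ℕ)/m) then (1:ℝ) else 0)
      = (D : ℝ) * m := by
  rw [Fintype.sum_prod_type]
  have inner : ∀ a : Fin D,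
      ∑ b : Fin D, (if ((a:ℕ)/m = (b:ℕ)/m) then (1:ℝ) else 0) = (m:ℝ) := by
    intro a
    have hAlt : (a : ℕ) / m < k := by
      rw [Nat.div_lt_iff_lt_mul hm]
      have := a.isLt
      omega
    rw [← Fintype.sum_equiv (finProdFinEquiv.trans (finCongr hDkm.symm))
      (fun cd => if ((a:ℕ)/m
        = (((finProdFinEquiv.trans (finCongr hDkm.symm)) cd : Fin D):ℕ)/m) then (1:ℝ) else 0)
      (fun b => if ((a:ℕ)/m = (b:ℕ)/m) then (1:ℝ) else 0) (fun cd => rfl)]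
    have hdiv : ∀ cd : Fin k × Fin m,
        (((finProdFinEquiv.trans (finCongr hDkm.symm)) cd : Fin D):ℕ)/m = (cd.1:ℕ) := by
      intro cd
      have hval : (((finProdFinEquiv.trans (finCongr hDkm.symm)) cd : Fin D):ℕ)
          = (cd.2:ℕ) + m * (cd.1:ℕ) := rfl
      rw [hval, Nat.add_mul_div_left _ _ hm, Nat.div_eq_of_lt cd.2.isLt, zero_add]
    simp only [hdiv]
    rw [Fintype.sum_prod_type]
    have hstep : ∀ x : Fin k,
        (∑ _y : Fin m, (if ((a:ℕ)/m = (x:ℕ)) then (1:ℝ) else 0))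
        = (m:ℝ) * (if ((a:ℕ)/m = (x:ℕ)) then (1:ℝ) else 0) := by
      intro x
      rw [Finset.sum_const, Finset.card_univ, Fintype.card_fin, nsmul_eq_mul]
    rw [Finset.sum_congr rfl (fun x _ => hstep x), ← Finset.mul_sum,
      sum_indicator hAlt, mul_one]
  rw [Finset.sum_congr rfl (fun a _ => inner a)]
  simp [Finset.card_univ, mul_comm]

lemma perm_sum_all {D k m : ℕ} (hm : 0 < m) (hDkm : D = k * m)
    (π : Equiv.Perm (Fin D)) :
    ∑ p : Fin D × Fin D, (if ((π p.1 : ℕ)/m = (π p.2 : ℕ)/m) then (1:ℝ) else 0)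
      = (D : ℝ) * m := by
  rw [Fintype.sum_equiv (Equiv.prodCongr π π)
    (fun p : Fin D × Fin D => if ((π p.1 : ℕ)/m = (π p.2 : ℕ)/m) then (1:ℝ) else 0)
    (fun p : Fin D × Fin D => if ((p.1 : ℕ)/m = (p.2 : ℕ)/m) then (1:ℝ) else 0)
    (fun p => rfl)]
  exact bincount hm hDkm

lemma perm_sum_offdiag {D k m : ℕ} (hm : 0 < m) (hDkm : D = k * m)
    (π : Equiv.Perm (Fin D)) :
    ∑ p ∈ (Finset.univ : Finset (Fin D)).offDiag,
        (if ((π p.1 : ℕ)/m = (π p.2 : ℕ)/m) then (1:ℝ) else 0)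
      = (D : ℝ) * m - D := by
  have hsplit := Finset.sum_union (f := fun p : Fin D × Fin D =>
      if ((π p.1 : ℕ)/m = (π p.2 : ℕ)/m) then (1:ℝ) else 0)
    (Finset.disjoint_diag_offDiag (Finset.univ : Finset (Fin D)))
  rw [Finset.diag_union_offDiag, Finset.univ_product_univ] at hsplit
  have hdiag : ∑ p ∈ (Finset.univ : Finset (Fin D)).diag,
      (if ((π p.1 : ℕ)/m = (π p.2 : ℕ)/m) then (1:ℝ) else 0) = (D : ℝ) := by
    rw [Finset.sum_diag]
    simp
  have hall := perm_sum_all hm hDkm π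
  rw [hsplit, hdiag] at hall
  linarith

lemma perm_count {D k : ℕ} (hk : 0 < k) (hkD : k ∣ D) {i i' : Fin D} (h : i ≠ i') :
    ∑ π : Equiv.Perm (Fin D),
        (if ((π i : ℕ) / (D/k) = (π i' : ℕ) / (D/k)) then (1:ℝ) else 0)
      = (D.factorial : ℝ) * (((D/k : ℕ) : ℝ) - 1) / ((D:ℝ) - 1) := by
  classical
  set m := D / k with hmdef
  have hD2 : 1 < D := by
    have : Nontrivial (Fin D) := ⟨⟨i, i', h⟩⟩
    simpa using Fintype.one_lt_card_iff_nontrivial.mpr this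
  have hDpos : 0 < D := by omega
  have hm : 0 < m := Nat.div_pos (Nat.le_of_dvd hDpos hkD) hk
  have hDkm : D = k * m := (Nat.mul_div_cancel' hkD).symm
  set S := ∑ π : Equiv.Perm (Fin D),
      (if ((π i : ℕ) / m = (π i' : ℕ) / m) then (1:ℝ) else 0) with hSdef
  have hconst : ∀ q ∈ (Finset.univ : Finset (Fin D)).offDiag,
      (∑ π : Equiv.Perm (Fin D),
        (if ((π q.1 : ℕ)/m = (π q.2 : ℕ)/m) then (1:ℝ) else 0)) = S := by
    intro q hq
    obtain ⟨σ, hσ1, hσ2⟩ := exists_sigma h (Finset.mem_offDiag.mp hq).2.2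
    exact (Fintype.sum_equiv (Equiv.mulRight σ)
      (fun π => if ((π q.1 : ℕ)/m = (π q.2 : ℕ)/m) then (1:ℝ) else 0)
      (fun π => if ((π i : ℕ)/m = (π i' : ℕ)/m) then (1:ℝ) else 0)
      (fun π => by simp [Equiv.Perm.mul_apply, hσ1, hσ2])).trans hSdef.symm
  have htot : ∑ q ∈ (Finset.univ : Finset (Fin D)).offDiag,
      (∑ π : Equiv.Perm (Fin D),
        (if ((π q.1 : ℕ)/m = (π q.2 : ℕ)/m) then (1:ℝ) else 0))
      = (D.factorial : ℝ) * ((D:ℝ) * m - D) := by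
    rw [Finset.sum_comm]
    rw [Finset.sum_congr rfl (fun π _ => perm_sum_offdiag hm hDkm π)]
    simp [Finset.card_univ, Fintype.card_perm, Fintype.card_fin, nsmul_eq_mul]
    ring
  rw [Finset.sum_congr rfl hconst, Finset.sum_const, Finset.offDiag_card,
    Finset.card_univ, Fintype.card_fin, nsmul_eq_mul] at htot
  have hcast : ((D * D - D : ℕ) : ℝ) = (D:ℝ) * D - D := by
    push_cast [Nat.cast_sub (Nat.le_mul_of_pos_left D hDpos)]
    ring
  rw [hcast] at htot
  have hD1 : (D:ℝ) - 1 ≠ 0 := by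
    have : (2:ℝ) ≤ (D:ℝ) := by exact_mod_cast hD2
    linarith
  have hD0 : (D:ℝ) ≠ 0 := by
    have : (2:ℝ) ≤ (D:ℝ) := by exact_mod_cast hD2
    linarith
  rw [eq_div_iff hD1]
  apply mul_left_cancel₀ hD0
  linear_combination htot

end Combinatorics
end OPORPaux
open MeasureTheory ProbabilityTheory OPORPaux

/-- Variance of the OPORP inner product estimator under the fixed-length binning
scheme (uniformly random permutation, `k` bins of length `D/k`):
`Var(â₁) = (s-1) Σ u_i²v_i² + (1/k)·((D-k)/(D-1))·(a² + Σu_i²·Σv_i² − 2Σu_i²v_i²)`.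
Since `â` is unbiased, the variance is `E[(â − a)²]`, where the expectation averages
over the random permutation (uniformly) and over the independent `r`. -/
theorem oporp_fixed_binning_variance
    {Ω : Type*} [MeasurableSpace Ω] (μ : Measure Ω) [IsProbabilityMeasure μ]
    {D k : ℕ} (hk : 0 < k) (hkD : k ∣ D)
    (u v : Fin D → ℝ) (s : ℝ) (r : Fin D → Ω → ℝ)
    (hrmeas : ∀ i, Measurable (r i))
    (hindep : iIndepFun r μ)
    (hL4 : ∀ i, MemLp (r i) 4 μ)
    (hm1 : ∀ i, ∫ ω, r i ω ∂μ = 0)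
    (hm2 : ∀ i, ∫ ω, (r i ω) ^ 2 ∂μ = 1)
    (hm3 : ∀ i, ∫ ω, (r i ω) ^ 3 ∂μ = 0)
    (hm4 : ∀ i, ∫ ω, (r i ω) ^ 4 ∂μ = s) :
    (∑ π : Equiv.Perm (Fin D), ∫ ω,
        ((∑ j : Fin k,
            (∑ i, u i * r i ω * (if ((π i : ℕ) / (D / k) = (j : ℕ)) then (1 : ℝ) else 0)) *
            (∑ i, v i * r i ω * (if ((π i : ℕ) / (D / k) = (j : ℕ)) then (1 : ℝ) else 0)))
          - ∑ i, u i * v i) ^ 2 ∂μ) / (Nat.factorial D : ℝ)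
      = (s - 1) * (∑ i, (u i) ^ 2 * (v i) ^ 2)
        + (1 / k) * (((D : ℝ) - k) / ((D : ℝ) - 1)) *
          ((∑ i, u i * v i) ^ 2 + (∑ i, (u i) ^ 2) * (∑ i, (v i) ^ 2)
            - 2 * ∑ i, (u i) ^ 2 * (v i) ^ 2) := by
  classical
  have key : ∀ π : Equiv.Perm (Fin D), (∫ ω,
        ((∑ j : Fin k,
            (∑ i, u i * r i ω * (if ((π i : ℕ) / (D / k) = (j : ℕ)) then (1 : ℝ) else 0)) *
            (∑ i, v i * r i ω * (if ((π i : ℕ) / (D / k) = (j : ℕ)) then (1 : ℝ) else 0)))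
          - ∑ i, u i * v i) ^ 2 ∂μ)
      = (s - 1) * (∑ i, (u i) ^ 2 * (v i) ^ 2)
        + ∑ p ∈ (Finset.univ : Finset (Fin D)).offDiag,
            (if ((π p.1 : ℕ) / (D / k) = ((π p.2 : ℕ) / (D / k))) then (1:ℝ) else 0)
            * ((u p.1) ^ 2 * (v p.2) ^ 2 + u p.1 * v p.1 * (u p.2 * v p.2)) := by
    intro π
    set T : Fin D × Fin D → ℝ := fun p =>
      if ((π p.1 : ℕ) / (D / k) = ((π p.2 : ℕ) / (D / k))) then (1:ℝ) else 0 with hT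
    set G : Fin D × Fin D → Ω → ℝ := fun p ω =>
      if p.1 = p.2 then u p.1 * v p.1 * ((r p.1 ω) ^ 2 - 1)
      else u p.1 * v p.2 * T p * (r p.1 ω * r p.2 ω) with hG
    have hGd : ∀ p : Fin D × Fin D, p.1 = p.2 →
        G p = fun ω => u p.1 * v p.1 * ((r p.1 ω) ^ 2 - 1) := by
      intro p hp; funext ω; rw [hG]; simp only [if_pos hp]
    have hGo : ∀ p : Fin D × Fin D, p.1 ≠ p.2 →
        G p = fun ω => u p.1 * v p.2 * T p * (r p.1 ω * r p.2 ω) := by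
      intro p hp; funext ω; rw [hG]; simp only [if_neg hp]
    have hTdiag : ∀ p : Fin D × Fin D, p.1 = p.2 → T p = 1 := by
      intro p hp; simp [hT, hp]
    have hTswap : ∀ p : Fin D × Fin D, T p.swap = T p := by
      intro p; rw [hT]; simp only [Prod.fst_swap, Prod.snd_swap]
      by_cases h : (π p.1 : ℕ) / (D / k) = ((π p.2 : ℕ) / (D / k))
      · rw [if_pos h, if_pos h.symm]
      · rw [if_neg h, if_neg (fun hc => h hc.symm)]
    have hTT : ∀ p : Fin D × Fin D, T p * T p = T p := by
      intro p; rw [hT]; dsimp only; split_ifs <;> ring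
    -- Step A
    have hptA : ∀ ω : Ω,
        (∑ j : Fin k,
            (∑ i, u i * r i ω * (if ((π i : ℕ) / (D / k) = (j : ℕ)) then (1 : ℝ) else 0)) *
            (∑ i, v i * r i ω * (if ((π i : ℕ) / (D / k) = (j : ℕ)) then (1 : ℝ) else 0)))
        = ∑ p : Fin D × Fin D, u p.1 * v p.2 * (r p.1 ω * r p.2 ω) * T p := by
      intro ω
      have h1 : ∀ j : Fin k,
          (∑ i, u i * r i ω * (if ((π i : ℕ) / (D / k) = (j : ℕ)) then (1 : ℝ) else 0)) *
          (∑ i, v i * r i ω * (if ((π i : ℕ) / (D / k) = (j : ℕ)) then (1 : ℝ) else 0))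
          = ∑ i : Fin D, ∑ i' : Fin D,
              (u i * r i ω * (if ((π i : ℕ) / (D / k) = (j : ℕ)) then (1 : ℝ) else 0)) *
              (v i' * r i' ω * (if ((π i' : ℕ) / (D / k) = (j : ℕ)) then (1 : ℝ) else 0)) :=
        fun j => Finset.sum_mul_sum _ _ _ _
      rw [Finset.sum_congr rfl fun j _ => h1 j]
      rw [Finset.sum_comm]
      rw [Finset.sum_congr rfl fun (i : Fin D) (_ : i ∈ Finset.univ) => Finset.sum_comm
        (s := (Finset.univ : Finset (Fin k))) (t := (Finset.univ : Finset (Fin D)))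
        (f := fun (j : Fin k) (i' : Fin D) =>
          (u i * r i ω * (if ((π i : ℕ) / (D / k) = (j : ℕ)) then (1 : ℝ) else 0)) *
          (v i' * r i' ω * (if ((π i' : ℕ) / (D / k) = (j : ℕ)) then (1 : ℝ) else 0)))]
      rw [← Finset.univ_product_univ, Finset.sum_product]
      refine Finset.sum_congr rfl fun i _ => Finset.sum_congr rfl fun i' _ => ?_
      have h2 : ∀ j : Fin k,
          (u i * r i ω * (if ((π i : ℕ) / (D / k) = (j : ℕ)) then (1 : ℝ) else 0)) *
          (v i' * r i' ω * (if ((π i' : ℕ) / (D / k) = (j : ℕ)) then (1 : ℝ) else 0))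
          = (u i * v i' * (r i ω * r i' ω)) *
            ((if ((π i : ℕ) / (D / k) = (j : ℕ)) then (1 : ℝ) else 0) *
             (if ((π i' : ℕ) / (D / k) = (j : ℕ)) then (1 : ℝ) else 0)) := fun j => by ring
      rw [Finset.sum_congr rfl fun j _ => h2 j, ← Finset.mul_sum]
      have hDpos : 0 < D := i.pos
      have hmpos : 0 < D / k := Nat.div_pos (Nat.le_of_dvd hDpos hkD) hk
      have hlt : (π i : ℕ) / (D / k) < k := by
        rw [Nat.div_lt_iff_lt_mul hmpos]
        have h3 : (π i : ℕ) < D := (π i).isLt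
        have h4 : k * (D / k) = D := Nat.mul_div_cancel' hkD
        omega
      rw [sum_ind hlt, hT]
    -- Step B
    have hptB : ∀ ω : Ω,
        ((∑ j : Fin k,
            (∑ i, u i * r i ω * (if ((π i : ℕ) / (D / k) = (j : ℕ)) then (1 : ℝ) else 0)) *
            (∑ i, v i * r i ω * (if ((π i : ℕ) / (D / k) = (j : ℕ)) then (1 : ℝ) else 0)))
          - ∑ i, u i * v i)
        = ∑ p : Fin D × Fin D, G p ω := by
      intro ω
      rw [hptA ω]
      have hdiagsum : ∑ p : Fin D × Fin D,
          (if p.1 = p.2 then u p.1 * v p.1 else 0) = ∑ i, u i * v i := by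
        rw [Fintype.sum_prod_type]
        refine Finset.sum_congr rfl fun i _ => ?_
        rw [Finset.sum_ite_eq]
        simp
      rw [← hdiagsum, ← Finset.sum_sub_distrib]
      refine Finset.sum_congr rfl fun p _ => ?_
      by_cases hp : p.1 = p.2
      · rw [if_pos hp, hGd p hp, hTdiag p hp, ← hp]
        ring
      · rw [if_neg hp, hGo p hp]
        ring
    -- Step C : integrate
    have hgL2 : ∀ p : Fin D × Fin D, MemLp (G p) 2 μ := by
      intro p
      by_cases hp : p.1 = p.2
      · rw [hGd p hp]
        exact ((memL2sq hL4 p.1).sub (memLp_const 1)).const_mul _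
      · rw [hGo p hp]
        exact (memL2mul hL4 p.1 p.2).const_mul _
    have hint : ∀ p q : Fin D × Fin D, Integrable (fun ω => G p ω * G q ω) μ :=
      fun p q => intmul (hgL2 p) (hgL2 q)
    simp only [hptB]
    have hsq : ∀ ω : Ω, (∑ p : Fin D × Fin D, G p ω) ^ 2
        = ∑ p : Fin D × Fin D, ∑ q : Fin D × Fin D, G p ω * G q ω := fun ω => by
      rw [sq, Finset.sum_mul_sum]
    simp only [hsq]
    rw [integral_finset_sum _ (fun p _ => integrable_finset_sum _ (fun q _ => hint p q))]
    rw [Finset.sum_congr rfl (fun p _ => integral_finset_sum _ (fun q _ => hint p q))]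
    -- the expectation table
    have hE : ∀ p : Fin D × Fin D,
        (∑ q : Fin D × Fin D, ∫ ω, G p ω * G q ω ∂μ)
        = if p.1 = p.2 then (u p.1 * v p.1) ^ 2 * (s - 1)
          else T p * ((u p.1) ^ 2 * (v p.2) ^ 2 + u p.1 * v p.1 * (u p.2 * v p.2)) := by
      intro p
      by_cases hp : p.1 = p.2
      · rw [if_pos hp]
        rw [Finset.sum_eq_single p]
        · rw [hGd p hp]
          rw [show (fun ω => (u p.1 * v p.1 * ((r p.1 ω) ^ 2 - 1)) *
                (u p.1 * v p.1 * ((r p.1 ω) ^ 2 - 1)))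
              = fun ω => (u p.1 * v p.1) ^ 2 *
                (((r p.1 ω) ^ 2 - 1) * ((r p.1 ω) ^ 2 - 1)) from funext fun ω => by ring]
          rw [integral_const_mul, E_diag_diag hrmeas hindep hL4 hm2 hm4 p.1 p.1, if_pos rfl]
        · intro q _ hqp
          by_cases hq : q.1 = q.2
          · have hne : p.1 ≠ q.1 := by
              intro hc
              exact hqp (Prod.ext hc.symm ((hq.symm.trans hc.symm).trans hp))
            rw [hGd p hp, hGd q hq]
            rw [show (fun ω => (u p.1 * v p.1 * ((r p.1 ω) ^ 2 - 1)) *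
                  (u q.1 * v q.1 * ((r q.1 ω) ^ 2 - 1)))
                = fun ω => (u p.1 * v p.1 * (u q.1 * v q.1)) *
                  (((r p.1 ω) ^ 2 - 1) * ((r q.1 ω) ^ 2 - 1)) from funext fun ω => by ring]
            rw [integral_const_mul, E_diag_diag hrmeas hindep hL4 hm2 hm4 p.1 q.1,
              if_neg hne, mul_zero]
          · rw [hGd p hp, hGo q hq]
            rw [show (fun ω => (u p.1 * v p.1 * ((r p.1 ω) ^ 2 - 1)) *
                  (u q.1 * v q.2 * T q * (r q.1 ω * r q.2 ω)))
                = fun ω => (u p.1 * v p.1 * (u q.1 * v q.2 * T q)) *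
                  (((r p.1 ω) ^ 2 - 1) * (r q.1 ω * r q.2 ω)) from funext fun ω => by ring]
            rw [integral_const_mul, E_diag_off hrmeas hindep hL4 hm1 hm3 hq, mul_zero]
        · exact fun h => absurd (Finset.mem_univ _) h
      · rw [if_neg hp]
        have hswapne : p ≠ p.swap := by
          intro hc
          exact hp (congrArg Prod.fst hc)
        have hvanish : ∀ q ∈ (Finset.univ : Finset (Fin D × Fin D)),
            q ∉ ({p, p.swap} : Finset (Fin D × Fin D)) → ∫ ω, G p ω * G q ω ∂μ = 0 := by
          intro q _ hq
          simp only [Finset.mem_insert, Finset.mem_singleton] at hq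
          push_neg at hq
          obtain ⟨hq1, hq2⟩ := hq
          by_cases hqd : q.1 = q.2
          · rw [hGo p hp, hGd q hqd]
            rw [show (fun ω => (u p.1 * v p.2 * T p * (r p.1 ω * r p.2 ω)) *
                  (u q.1 * v q.1 * ((r q.1 ω) ^ 2 - 1)))
                = fun ω => (u p.1 * v p.2 * T p * (u q.1 * v q.1)) *
                  (((r q.1 ω) ^ 2 - 1) * (r p.1 ω * r p.2 ω)) from funext fun ω => by ring]
            rw [integral_const_mul, E_diag_off hrmeas hindep hL4 hm1 hm3 hp, mul_zero]
          · rw [hGo p hp, hGo q hqd]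
            rw [show (fun ω => (u p.1 * v p.2 * T p * (r p.1 ω * r p.2 ω)) *
                  (u q.1 * v q.2 * T q * (r q.1 ω * r q.2 ω)))
                = fun ω => (u p.1 * v p.2 * T p * (u q.1 * v q.2 * T q)) *
                  (r p.1 ω * r p.2 ω * (r q.1 ω * r q.2 ω)) from funext fun ω => by ring]
            rw [integral_const_mul, E_off_off hrmeas hindep hm1 hm2 hp hqd]
            have hcond : ¬((p.1 = q.1 ∧ p.2 = q.2) ∨ (p.1 = q.2 ∧ p.2 = q.1)) := by
              rintro (⟨h1, h2⟩ | ⟨h1, h2⟩)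
              · exact hq1 (Prod.ext h1.symm h2.symm)
              · exact hq2 (Prod.ext (by simpa using h2.symm) (by simpa using h1.symm))
            rw [if_neg hcond, mul_zero]
        rw [← Finset.sum_subset (Finset.subset_univ ({p, p.swap} : Finset (Fin D × Fin D)))
          hvanish]
        rw [Finset.sum_pair hswapne]
        have hval1 : ∫ ω, G p ω * G p ω ∂μ = (u p.1 * v p.2 * T p) ^ 2 := by
          rw [hGo p hp]
          rw [show (fun ω => (u p.1 * v p.2 * T p * (r p.1 ω * r p.2 ω)) *
                (u p.1 * v p.2 * T p * (r p.1 ω * r p.2 ω)))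
              = fun ω => (u p.1 * v p.2 * T p) ^ 2 *
                (r p.1 ω * r p.2 ω * (r p.1 ω * r p.2 ω)) from funext fun ω => by ring]
          rw [integral_const_mul, E_off_off hrmeas hindep hm1 hm2 hp hp,
            if_pos (Or.inl ⟨rfl, rfl⟩), mul_one]
        have hswapd : p.swap.1 ≠ p.swap.2 := by
          simp only [Prod.fst_swap, Prod.snd_swap]
          exact fun h => hp h.symm
        have hval2 : ∫ ω, G p ω * G p.swap ω ∂μ
            = (u p.1 * v p.2 * T p) * (u p.2 * v p.1 * T p) := by
          rw [hGo p hp, hGo p.swap hswapd]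
          simp only [Prod.fst_swap, Prod.snd_swap, hTswap p]
          rw [show (fun ω => (u p.1 * v p.2 * T p * (r p.1 ω * r p.2 ω)) *
                (u p.2 * v p.1 * T p * (r p.2 ω * r p.1 ω)))
              = fun ω => (u p.1 * v p.2 * T p * (u p.2 * v p.1 * T p)) *
                (r p.1 ω * r p.2 ω * (r p.2 ω * r p.1 ω)) from funext fun ω => by ring]
          rw [integral_const_mul, E_off_off hrmeas hindep hm1 hm2 hp (Ne.symm hp),
            if_pos (Or.inr ⟨rfl, rfl⟩), mul_one]
        rw [hval1, hval2]
        linear_combination ((u p.1) ^ 2 * (v p.2) ^ 2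
          + u p.1 * v p.1 * (u p.2 * v p.2)) * hTT p
    rw [Finset.sum_congr rfl (fun p _ => hE p)]
    -- split diagonal / off-diagonal
    have hsplit := Finset.sum_union (f := fun p : Fin D × Fin D =>
        if p.1 = p.2 then (u p.1 * v p.1) ^ 2 * (s - 1)
        else T p * ((u p.1) ^ 2 * (v p.2) ^ 2 + u p.1 * v p.1 * (u p.2 * v p.2)))
      (Finset.disjoint_diag_offDiag (Finset.univ : Finset (Fin D)))
    rw [Finset.diag_union_offDiag, Finset.univ_product_univ] at hsplit
    rw [hsplit]
    congr 1
    · rw [Finset.sum_diag, Finset.mul_sum]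
      refine Finset.sum_congr rfl fun i _ => ?_
      dsimp only
      rw [if_pos rfl]
      ring
    · refine Finset.sum_congr rfl fun p hpo => ?_
      rw [if_neg (Finset.mem_offDiag.mp hpo).2.2, hT]
  -- assemble over permutations
  rw [Finset.sum_congr rfl (fun π _ => key π)]
  rw [Finset.sum_add_distrib, Finset.sum_const, Finset.card_univ, Fintype.card_perm,
    Fintype.card_fin, Finset.sum_comm]
  have hperm : ∀ p ∈ (Finset.univ : Finset (Fin D)).offDiag,
      (∑ π : Equiv.Perm (Fin D),
        (if ((π p.1 : ℕ) / (D / k) = ((π p.2 : ℕ) / (D / k))) then (1:ℝ) else 0)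
        * ((u p.1) ^ 2 * (v p.2) ^ 2 + u p.1 * v p.1 * (u p.2 * v p.2)))
      = ((D.factorial : ℝ) * (((D/k : ℕ) : ℝ) - 1) / ((D:ℝ) - 1))
        * ((u p.1) ^ 2 * (v p.2) ^ 2 + u p.1 * v p.1 * (u p.2 * v p.2)) := by
    intro p hp
    rw [← Finset.sum_mul, perm_count hk hkD (Finset.mem_offDiag.mp hp).2.2]
  rw [Finset.sum_congr rfl hperm, ← Finset.mul_sum]
  have hW : ∑ p ∈ (Finset.univ : Finset (Fin D)).offDiag,
      ((u p.1) ^ 2 * (v p.2) ^ 2 + u p.1 * v p.1 * (u p.2 * v p.2))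
      = (∑ i, u i * v i) ^ 2 + (∑ i, (u i) ^ 2) * (∑ i, (v i) ^ 2)
        - 2 * ∑ i, (u i) ^ 2 * (v i) ^ 2 := by
    have hsplit := Finset.sum_union (f := fun p : Fin D × Fin D =>
        (u p.1) ^ 2 * (v p.2) ^ 2 + u p.1 * v p.1 * (u p.2 * v p.2))
      (Finset.disjoint_diag_offDiag (Finset.univ : Finset (Fin D)))
    rw [Finset.diag_union_offDiag, Finset.univ_product_univ] at hsplit
    have hall : ∑ p : Fin D × Fin D,
        ((u p.1) ^ 2 * (v p.2) ^ 2 + u p.1 * v p.1 * (u p.2 * v p.2))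
        = (∑ i, (u i) ^ 2) * (∑ i, (v i) ^ 2) + (∑ i, u i * v i) ^ 2 := by
      rw [Fintype.sum_prod_type]
      rw [Finset.sum_congr rfl (fun (i : Fin D) (_ : i ∈ Finset.univ) =>
        Finset.sum_add_distrib)]
      rw [Finset.sum_add_distrib]
      congr 1
      · rw [Finset.sum_mul_sum]
      · rw [sq, Finset.sum_mul_sum]
    have hdiag : ∑ p ∈ (Finset.univ : Finset (Fin D)).diag,
        ((u p.1) ^ 2 * (v p.2) ^ 2 + u p.1 * v p.1 * (u p.2 * v p.2))
        = 2 * ∑ i, (u i) ^ 2 * (v i) ^ 2 := by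
      rw [Finset.sum_diag, Finset.mul_sum]
      exact Finset.sum_congr rfl fun i _ => by ring
    rw [hdiag] at hsplit
    rw [hall] at hsplit
    linarith
  rw [hW]
  -- final arithmetic
  have hfact : (D.factorial : ℝ) ≠ 0 := Nat.cast_ne_zero.mpr (Nat.factorial_ne_zero D)
  have hkR : (k:ℝ) ≠ 0 := Nat.cast_ne_zero.mpr hk.ne'
  have hDval : (D:ℝ) = (k:ℝ) * ((D/k : ℕ) : ℝ) := by
    exact_mod_cast congrArg (Nat.cast : ℕ → ℝ) (Nat.mul_div_cancel' hkD).symm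
  set B := (∑ i, u i * v i) ^ 2 + (∑ i, (u i) ^ 2) * (∑ i, (v i) ^ 2)
      - 2 * ∑ i, (u i) ^ 2 * (v i) ^ 2 with hB
  set A := (s - 1) * (∑ i, (u i) ^ 2 * (v i) ^ 2) with hA
  have hcoef : (D.factorial : ℝ) * (((D/k : ℕ) : ℝ) - 1) / ((D:ℝ) - 1)
      = (D.factorial : ℝ) * ((1 / k) * (((D : ℝ) - k) / ((D : ℝ) - 1))) := by
    set mr := ((D/k : ℕ) : ℝ) with hmr
    rw [hDval]
    have h1 : (k:ℝ) * mr - k = k * (mr - 1) := by ring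
    rw [h1]
    rw [div_mul_div_comm, one_mul, mul_div_assoc]
    congr 1
    exact (mul_div_mul_left _ _ hkR).symm
  rw [hcoef, nsmul_eq_mul]
  field_simp
end

section
/- For the variable-length binning scheme, the variance of â = Σ_j x_j y_j equals (s-1) Σ_i u_i^2 v_i^2 + (1/k)·(a^2 + Σ_i u_i^2 · Σ_i v_i^2 − 2 Σ_i u_i^2 v_i^2), where a = Σ_i u_i v_i. -/
open MeasureTheory ProbabilityTheory

section OporpAux

variable {Ω : Type*} [MeasurableSpace Ω] {μ : Measure Ω} [IsProbabilityMeasure μ]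
  {D : ℕ} {r : Fin D → Ω → ℝ} {s : ℝ}

lemma oporp_aux_int (hrmeas : ∀ i, Measurable (r i)) (hL4 : ∀ i, MemLp (r i) 4 μ)
    (i : Fin D) (e : ℕ) (he : e ≤ 4) : Integrable (fun ω => r i ω ^ e) μ := by
  have h4 : Integrable (fun ω => r i ω ^ 4) μ := by
    have h := (hL4 i).integrable_norm_rpow (by norm_num) (by norm_num)
    refine h.congr (Filter.Eventually.of_forall fun ω => ?_)
    simp only [ENNReal.toReal_ofNat, Real.norm_eq_abs]
    rw [show ((4:ℝ)) = ((4:ℕ):ℝ) by norm_num, Real.rpow_natCast, ← abs_pow,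
      abs_of_nonneg (by positivity)]
  have hbd : Integrable (fun ω => 1 + r i ω ^ 4) μ := (integrable_const 1).add h4
  refine hbd.mono' ((hrmeas i).pow_const e).aestronglyMeasurable
    (Filter.Eventually.of_forall fun ω => ?_)
  rw [Real.norm_eq_abs, abs_pow]
  have h4nn : (0:ℝ) ≤ r i ω ^ 4 := by positivity
  rcases le_total (|r i ω|) 1 with h | h
  · have : |r i ω| ^ e ≤ 1 := pow_le_one₀ (abs_nonneg _) h
    linarith
  · have h1 : |r i ω| ^ e ≤ |r i ω| ^ 4 := pow_le_pow_right₀ h he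
    have h2 : |r i ω| ^ 4 = r i ω ^ 4 := by
      rw [← abs_pow]; exact abs_of_nonneg h4nn
    linarith

lemma oporp_aux_master (hrmeas : ∀ i, Measurable (r i))
    (hindep : iIndepFun r μ)
    (hL4 : ∀ i, MemLp (r i) 4 μ) (e : Fin D → ℕ) (he : ∀ i, e i ≤ 4) (t : Finset (Fin D)) :
    Integrable (fun ω => ∏ i ∈ t, r i ω ^ e i) μ ∧
      ∫ ω, ∏ i ∈ t, r i ω ^ e i ∂μ = ∏ i ∈ t, ∫ ω, r i ω ^ e i ∂μ := by
  classical
  induction t using Finset.induction_on with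
  | empty => simp
  | @insert a t ha ih =>
    have hfam : iIndepFun (fun i ω => r i ω ^ e i) μ :=
      hindep.comp (fun i x => x ^ e i) (fun i => measurable_id.pow_const _)
    have hpair :
        IndepFun (fun ω => ∏ j ∈ t, r j ω ^ e j) (fun ω => r a ω ^ e a) μ := by
      have h := hfam.indepFun_finsetProd_of_notMem
        (fun i => (hrmeas i).pow_const _) ha
      have hprod : (∏ j ∈ t, fun ω => r j ω ^ e j) = fun ω => ∏ j ∈ t, r j ω ^ e j := by
        funext ω; simp [Finset.prod_apply]
      rwa [hprod] at h
    have hia := oporp_aux_int hrmeas hL4 a (e a) (he a)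
    have hmul := hpair.symm.integrable_mul hia ih.1
    have hval := hpair.symm.integral_mul_eq_mul_integral hia.aestronglyMeasurable ih.1.aestronglyMeasurable
    constructor
    · refine hmul.congr (Filter.Eventually.of_forall fun ω => ?_)
      simp [Finset.prod_insert ha]
    · rw [show (fun ω => ∏ i ∈ insert a t, r i ω ^ e i)
          = (fun ω => r a ω ^ e a) * (fun ω => ∏ j ∈ t, r j ω ^ e j) by
            funext ω; rw [Finset.prod_insert ha]; rfl]
      rw [hval, ih.2, Finset.prod_insert ha]

end OporpAux

section OporpAux2

variable {Ω : Type*} [MeasurableSpace Ω] {μ : Measure Ω} [IsProbabilityMeasure μ]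
  {D : ℕ} {r : Fin D → Ω → ℝ} {s : ℝ}

lemma oporp_prod_subset {M : Type*} [CommMonoid M] (t : Finset (Fin D)) (f : Fin D → M)
    (h : ∀ i ∉ t, f i = 1) : ∏ i, f i = ∏ i ∈ t, f i :=
  (Finset.prod_subset (Finset.subset_univ t) (fun x _ hx => h x hx)).symm

lemma oporp_mom2 (hrmeas : ∀ i, Measurable (r i))
    (hindep : iIndepFun r μ)
    (hL4 : ∀ i, MemLp (r i) 4 μ)
    (hm1 : ∀ i, ∫ ω, r i ω ∂μ = 0) (hm2 : ∀ i, ∫ ω, (r i ω) ^ 2 ∂μ = 1) (a b : Fin D) :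
    Integrable (fun ω => r a ω * r b ω) μ ∧
      ∫ ω, r a ω * r b ω ∂μ = if a = b then (1:ℝ) else 0 := by
  classical
  set e : Fin D → ℕ := fun i => (if i = a then 1 else 0) + (if i = b then 1 else 0) with he_def
  have he : ∀ i, e i ≤ 4 := by intro i; simp only [he_def]; split_ifs <;> norm_num
  have hfe : (fun ω => r a ω * r b ω) = fun ω => ∏ i, r i ω ^ e i := by
    funext ω
    simp only [he_def, pow_add]
    rw [Finset.prod_mul_distrib]
    congr 1 <;> simp [pow_ite]
  obtain ⟨hint, hval⟩ := oporp_aux_master hrmeas hindep hL4 e he Finset.univ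
  refine ⟨by rw [hfe]; exact hint, ?_⟩
  rw [hfe, hval]
  by_cases hab : a = b
  · subst hab
    have hsupp : ∀ i ∉ ({a} : Finset (Fin D)), ∫ ω, r i ω ^ e i ∂μ = 1 := by
      intro i hi
      have hnia : ¬ i = a := by simpa using hi
      simp [he_def, hnia]
    rw [if_pos rfl, oporp_prod_subset {a} _ hsupp, Finset.prod_singleton]
    have h2 : e a = 2 := by simp [he_def]
    rw [h2]
    exact hm2 a
  · rw [if_neg hab]
    refine Finset.prod_eq_zero (Finset.mem_univ a) ?_
    have h1 : e a = 1 := by simp [he_def, hab]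
    rw [h1]
    simp only [pow_one]
    exact hm1 a

lemma oporp_mom4 (hrmeas : ∀ i, Measurable (r i))
    (hindep : iIndepFun r μ)
    (hL4 : ∀ i, MemLp (r i) 4 μ)
    (hm1 : ∀ i, ∫ ω, r i ω ∂μ = 0) (hm2 : ∀ i, ∫ ω, (r i ω) ^ 2 ∂μ = 1)
    (hm3 : ∀ i, ∫ ω, (r i ω) ^ 3 ∂μ = 0) (hm4 : ∀ i, ∫ ω, (r i ω) ^ 4 ∂μ = s)
    (a b c d : Fin D) :
    Integrable (fun ω => r a ω * r b ω * (r c ω * r d ω)) μ ∧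
      ∫ ω, r a ω * r b ω * (r c ω * r d ω) ∂μ =
        (if a = b then (1:ℝ) else 0) * (if c = d then 1 else 0)
        + (if a = c then (1:ℝ) else 0) * (if b = d then 1 else 0)
        + (if a = d then (1:ℝ) else 0) * (if b = c then 1 else 0)
        + (s - 3) * ((if a = b then (1:ℝ) else 0) * (if a = c then 1 else 0)
            * (if a = d then 1 else 0)) := by
  classical
  set e : Fin D → ℕ := fun i => ((if i = a then 1 else 0) + (if i = b then 1 else 0))
      + ((if i = c then 1 else 0) + (if i = d then 1 else 0)) with he_def
  have he : ∀ i, e i ≤ 4 := by intro i; simp only [he_def]; split_ifs <;> norm_num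
  have hfe : (fun ω => r a ω * r b ω * (r c ω * r d ω)) = fun ω => ∏ i, r i ω ^ e i := by
    funext ω
    simp only [he_def, pow_add]
    rw [Finset.prod_mul_distrib, Finset.prod_mul_distrib, Finset.prod_mul_distrib]
    congr 1
    · congr 1 <;> simp [pow_ite]
    · congr 1 <;> simp [pow_ite]
  obtain ⟨hint, hval⟩ := oporp_aux_master hrmeas hindep hL4 e he Finset.univ
  refine ⟨by rw [hfe]; exact hint, ?_⟩
  rw [hfe, hval]
  have hzero : ∀ x : Fin D, e x = 1 ∨ e x = 3 → ∏ i, ∫ ω, r i ω ^ e i ∂μ = 0 := by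
    intro x hx
    refine Finset.prod_eq_zero (Finset.mem_univ x) ?_
    rcases hx with hx | hx
    · rw [hx]; simp only [pow_one]; exact hm1 x
    · rw [hx]; exact hm3 x
  by_cases hab : a = b
  · subst hab
    by_cases hcd : c = d
    · subst hcd
      by_cases hac : a = c
      · subst hac
        -- all four equal : value s
        have hsupp : ∀ i ∉ ({a} : Finset (Fin D)), ∫ ω, r i ω ^ e i ∂μ = 1 := by
          intro i hi
          have hnia : ¬ i = a := by simpa using hi
          simp [he_def, hnia]
        rw [oporp_prod_subset {a} _ hsupp, Finset.prod_singleton]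
        have h4 : e a = 4 := by simp [he_def]
        rw [h4, hm4 a]
        norm_num
      · -- a = b, c = d, a ≠ c : value 1
        have hsupp : ∀ i ∉ ({a, c} : Finset (Fin D)), ∫ ω, r i ω ^ e i ∂μ = 1 := by
          intro i hi
          simp only [Finset.mem_insert, Finset.mem_singleton, not_or] at hi
          simp [he_def, hi.1, hi.2]
        rw [oporp_prod_subset {a, c} _ hsupp, Finset.prod_pair hac]
        have h1 : e a = 2 := by simp [he_def, hac]
        have h2 : e c = 2 := by simp [he_def, Ne.symm hac]
        rw [h1, h2, hm2 a, hm2 c]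
        simp [hac]
    · -- a = b, c ≠ d
      by_cases hac : a = c
      · subst hac
        have hda : ¬ d = a := fun h => hcd h.symm
        rw [hzero d (Or.inl (by simp [he_def, hda]))]
        simp [hcd]
      · by_cases had : a = d
        · subst had
          have hca : ¬ c = a := fun h => hac h.symm
          rw [hzero c (Or.inl (by simp [he_def, hca, hcd]))]
          simp [hcd, hac]
        · have hca : ¬ c = a := fun h => hac h.symm
          rw [hzero c (Or.inl (by simp [he_def, hca, hcd]))]
          simp [hcd, hac, had]
  · -- a ≠ b
    by_cases hac : a = c
    · subst hac
      by_cases hbd : b = d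
      · subst hbd
        have hsupp : ∀ i ∉ ({a, b} : Finset (Fin D)), ∫ ω, r i ω ^ e i ∂μ = 1 := by
          intro i hi
          simp only [Finset.mem_insert, Finset.mem_singleton, not_or] at hi
          simp [he_def, hi.1, hi.2]
        rw [oporp_prod_subset {a, b} _ hsupp, Finset.prod_pair hab]
        have h1 : e a = 2 := by simp [he_def, hab]
        have h2 : e b = 2 := by simp [he_def, Ne.symm hab]
        rw [h1, h2, hm2 a, hm2 b]
        simp [hab]
      · have hba : ¬ b = a := fun h => hab h.symm
        rw [hzero b (Or.inl (by simp [he_def, hba, hbd]))]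
        simp [hab, hbd, hba]
    · by_cases had : a = d
      · subst had
        by_cases hbc : b = c
        · subst hbc
          have hsupp : ∀ i ∉ ({a, b} : Finset (Fin D)), ∫ ω, r i ω ^ e i ∂μ = 1 := by
            intro i hi
            simp only [Finset.mem_insert, Finset.mem_singleton, not_or] at hi
            simp [he_def, hi.1, hi.2]
          rw [oporp_prod_subset {a, b} _ hsupp, Finset.prod_pair hab]
          have h1 : e a = 2 := by simp [he_def, hab]
          have h2 : e b = 2 := by simp [he_def, Ne.symm hab]
          rw [h1, h2, hm2 a, hm2 b]
          simp [hab, hac]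
        · have hba : ¬ b = a := fun h => hab h.symm
          rw [hzero b (Or.inl (by simp [he_def, hba, hbc]))]
          simp [hab, hac, hbc]
      · rw [hzero a (Or.inl (by simp [he_def, hab, hac, had]))]
        simp [hab, hac, had]

end OporpAux2

lemma oporp_prod_subset' {D : ℕ} {M : Type*} [CommMonoid M] (t : Finset (Fin D)) (f : Fin D → M)
    (h : ∀ i ∉ t, f i = 1) : ∏ i, f i = ∏ i ∈ t, f i :=
  (Finset.prod_subset (Finset.subset_univ t) (fun x _ hx => h x hx)).symm

lemma oporp_sum_delta {k : ℕ} (x y : Fin k) :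
    (∑ j : Fin k, (if x = j then (1:ℝ) else 0) * (if y = j then 1 else 0)) =
      if x = y then 1 else 0 := by
  by_cases h : x = y
  · subst h
    simp [Finset.sum_ite_eq]
  · rw [if_neg h]
    refine Finset.sum_eq_zero fun j _ => ?_
    by_cases hx : x = j
    · subst hx
      rw [if_neg (fun hy : y = x => h hy.symm), mul_zero]
    · rw [if_neg hx, zero_mul]

lemma oporp_count1 {D k : ℕ} (hk : 0 < k) {a b : Fin D} (hab : a ≠ b) :
    (∑ g : Fin D → Fin k, (if g a = g b then (1:ℝ) else 0)) = (k:ℝ)^D / k := by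
  classical
  have hD : 2 ≤ D := by
    have h1 : 1 < Fintype.card (Fin D) := Fintype.one_lt_card_iff_nontrivial.mpr ⟨⟨a, b, hab⟩⟩
    simp at h1; omega
  have hk0 : (k:ℝ) ≠ 0 := Nat.cast_ne_zero.mpr hk.ne'
  have step1 : (∑ g : Fin D → Fin k, (if g a = g b then (1:ℝ) else 0)) =
      ∑ g : Fin D → Fin k, ∑ j : Fin k,
        (if g a = j then (1:ℝ) else 0) * (if g b = j then 1 else 0) :=
    Finset.sum_congr rfl fun g _ => (oporp_sum_delta _ _).symm
  rw [step1, Finset.sum_comm]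
  have step2 : ∀ (j : Fin k) (g : Fin D → Fin k),
      (if g a = j then (1:ℝ) else 0) * (if g b = j then 1 else 0)
      = ∏ i, (if i = a then (if g i = j then (1:ℝ) else 0)
          else if i = b then (if g i = j then (1:ℝ) else 0) else 1) := by
    intro j g
    rw [oporp_prod_subset' {a, b} _ ?_]
    · rw [Finset.prod_pair hab]
      simp [hab]
    · intro i hi
      simp only [Finset.mem_insert, Finset.mem_singleton, not_or] at hi
      simp [hi.1, hi.2]
  have step3 : ∀ j : Fin k,
      (∑ g : Fin D → Fin k, ∑ j' : Fin k, (0:ℝ)) = 0 := by intro j; simp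
  calc
    (∑ j : Fin k, ∑ g : Fin D → Fin k,
        (if g a = j then (1:ℝ) else 0) * (if g b = j then 1 else 0))
      = ∑ j : Fin k, ∑ g : Fin D → Fin k,
          ∏ i, (if i = a then (if g i = j then (1:ℝ) else 0)
            else if i = b then (if g i = j then (1:ℝ) else 0) else 1) := by
        exact Finset.sum_congr rfl fun j _ => Finset.sum_congr rfl fun g _ => step2 j g
    _ = ∑ j : Fin k, ∏ i : Fin D, ∑ x : Fin k,
          (if i = a then (if x = j then (1:ℝ) else 0)
            else if i = b then (if x = j then (1:ℝ) else 0) else 1) := by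
        refine Finset.sum_congr rfl fun j _ => ?_
        rw [Finset.prod_univ_sum]
        rw [Fintype.piFinset_univ]
    _ = ∑ j : Fin k, ∏ i : Fin D,
          (if i = a then (1:ℝ) else if i = b then 1 else (k:ℝ)) := by
        refine Finset.sum_congr rfl fun j _ => Finset.prod_congr rfl fun i _ => ?_
        split_ifs with h1 h2
        · simp [Finset.sum_ite_eq']
        · simp [Finset.sum_ite_eq']
        · simp
    _ = ∑ j : Fin k, (k:ℝ) ^ (D - 2) := by
        refine Finset.sum_congr rfl fun j _ => ?_
        rw [← Finset.prod_sdiff (Finset.subset_univ ({a, b} : Finset (Fin D)))]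
        rw [Finset.prod_pair hab]
        rw [if_pos rfl, if_neg (Ne.symm hab), if_pos rfl]
        have hconst : ∀ i ∈ Finset.univ \ ({a, b} : Finset (Fin D)),
            (if i = a then (1:ℝ) else if i = b then 1 else (k:ℝ)) = (k:ℝ) := by
          intro i hi
          simp only [Finset.mem_sdiff, Finset.mem_insert, Finset.mem_singleton, not_or] at hi
          simp [hi.2.1, hi.2.2]
        rw [Finset.prod_congr rfl hconst, Finset.prod_const]
        have hcard : (Finset.univ \ ({a, b} : Finset (Fin D))).card = D - 2 := by
          rw [Finset.card_sdiff_of_subset (Finset.subset_univ _), Finset.card_univ, Fintype.card_fin,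
            Finset.card_pair hab]
        rw [hcard]
        ring
    _ = (k:ℝ)^D / k := by
        rw [Finset.sum_const, Finset.card_univ, Fintype.card_fin, nsmul_eq_mul]
        rw [pow_sub₀ _ hk0 hD]
        field_simp

lemma oporp_card_fun {D k : ℕ} : (Finset.univ : Finset (Fin D → Fin k)).card = k ^ D := by
  rw [Finset.card_univ]
  simp [Fintype.card_fun]

lemma oporp_key {D k : ℕ} (hk : 0 < k) (s : ℝ) (a b c d : Fin D) :
    (∑ g : Fin D → Fin k, (if g a = g b then (1:ℝ) else 0) * (if g c = g d then 1 else 0)) *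
      ((if a = b then (1:ℝ) else 0) * (if c = d then 1 else 0)
        + (if a = c then (1:ℝ) else 0) * (if b = d then 1 else 0)
        + (if a = d then (1:ℝ) else 0) * (if b = c then 1 else 0)
        + (s - 3) * ((if a = b then (1:ℝ) else 0) * (if a = c then 1 else 0)
            * (if a = d then 1 else 0)))
    = (k:ℝ)^D * ((if a = b then (1:ℝ) else 0) * (if c = d then 1 else 0)
        + (s - 1) * ((if a = b then (1:ℝ) else 0) * (if a = c then 1 else 0)
            * (if a = d then 1 else 0))
        + (1/(k:ℝ)) * ((if a = c then (1:ℝ) else 0) * (if b = d then 1 else 0)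
            + (if a = d then (1:ℝ) else 0) * (if b = c then 1 else 0)
            - 2 * ((if a = b then (1:ℝ) else 0) * (if a = c then 1 else 0)
                * (if a = d then 1 else 0)))) := by
  classical
  have hk0 : (k:ℝ) ≠ 0 := Nat.cast_ne_zero.mpr hk.ne'
  by_cases hab : a = b
  · subst hab
    by_cases hcd : c = d
    · subst hcd
      have hsum : (∑ g : Fin D → Fin k,
          (if g a = g a then (1:ℝ) else 0) * (if g c = g c then 1 else 0)) = (k:ℝ)^D := by
        simp [Finset.sum_const, oporp_card_fun]
      rw [hsum]
      by_cases hac : a = c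
      · subst hac
        simp only [if_pos rfl]
        field_simp
        simp only [if_true]
        ring
      · simp only [if_pos rfl, if_neg hac, if_neg (fun h : c = a => hac h.symm)]
        ring
    · -- c ≠ d : both multipliers vanish
      by_cases hac : a = c
      · have had : ¬ a = d := fun h => hcd (hac.symm.trans h)
        simp [hcd, had]
      · by_cases had : a = d
        · have hbc : ¬ a = c := hac
          simp [hcd, hac]
        · simp [hcd, hac, had]
  · -- a ≠ b
    by_cases hcd : c = d
    · subst hcd
      by_cases hac : a = c
      · have hbd : ¬ b = c := fun h => hab (hac.trans h.symm)
        have hcb : ¬ c = b := fun h => hab (hac.trans h)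
        simp [hab, hac, hbd, hcb]
      · by_cases hbc : b = c
        · have had : ¬ a = c := hac
          simp [hab, hac]
        · simp [hab, hac, hbc]
    · -- a ≠ b, c ≠ d
      by_cases hac : a = c
      · subst hac
        by_cases hbd : b = d
        · subst hbd
          -- pairing a=c, b=d
          have hsum : (∑ g : Fin D → Fin k,
              (if g a = g b then (1:ℝ) else 0) * (if g a = g b then 1 else 0))
              = (k:ℝ)^D / k := by
            have : ∀ g : Fin D → Fin k,
                (if g a = g b then (1:ℝ) else 0) * (if g a = g b then 1 else 0)
                = if g a = g b then 1 else 0 := by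
              intro g; split_ifs <;> norm_num
            rw [Finset.sum_congr rfl fun g _ => this g]
            exact oporp_count1 hk hab
          rw [hsum]
          have hba : ¬ b = a := fun h => hab h.symm
          simp only [if_neg hab, if_pos rfl, if_neg hba]
          field_simp
          simp
        · have hba : ¬ b = a := fun h => hab h.symm
          simp [hab, hbd, hba]
      · by_cases had : a = d
        · subst had
          by_cases hbc : b = c
          · subst hbc
            -- pairing a=d, b=c
            have hsum : (∑ g : Fin D → Fin k,
                (if g a = g b then (1:ℝ) else 0) * (if g b = g a then 1 else 0))
                = (k:ℝ)^D / k := by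
              have : ∀ g : Fin D → Fin k,
                  (if g a = g b then (1:ℝ) else 0) * (if g b = g a then 1 else 0)
                  = if g a = g b then 1 else 0 := by
                intro g
                by_cases h : g a = g b
                · rw [if_pos h, if_pos h.symm, mul_one]
                · rw [if_neg h, zero_mul]
              rw [Finset.sum_congr rfl fun g _ => this g]
              exact oporp_count1 hk hab
            rw [hsum]
            have hba : ¬ b = a := fun h => hab h.symm
            simp only [if_neg hab, if_pos rfl, if_neg hba, if_neg hac]
            field_simp
            simp
          · simp [hab, hac, hbc]
        · simp [hab, hac, had]



/-- Variance of the OPORP inner product estimator under the variable-length binning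
scheme (each coordinate independently uniformly assigned to one of `k` bins):
`Var(â₂) = (s-1) Σ u_i²v_i² + (1/k)·(a² + Σu_i²·Σv_i² − 2Σu_i²v_i²)`.
Since `â` is unbiased, the variance is `E[(â − a)²]`, averaging uniformly over the
`k^D` bin assignments `g : Fin D → Fin k` and over the independent `r`. -/
theorem oporp_variable_binning_variance
    {Ω : Type*} [MeasurableSpace Ω] (μ : Measure Ω) [IsProbabilityMeasure μ]
    {D k : ℕ} (hk : 0 < k)
    (u v : Fin D → ℝ) (s : ℝ) (r : Fin D → Ω → ℝ)
    (hrmeas : ∀ i, Measurable (r i))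
    (hindep : iIndepFun r μ)
    (hL4 : ∀ i, MemLp (r i) 4 μ)
    (hm1 : ∀ i, ∫ ω, r i ω ∂μ = 0)
    (hm2 : ∀ i, ∫ ω, (r i ω) ^ 2 ∂μ = 1)
    (hm3 : ∀ i, ∫ ω, (r i ω) ^ 3 ∂μ = 0)
    (hm4 : ∀ i, ∫ ω, (r i ω) ^ 4 ∂μ = s) :
    (∑ g : Fin D → Fin k, ∫ ω,
        ((∑ j : Fin k,
            (∑ i, u i * r i ω * (if g i = j then (1 : ℝ) else 0)) *
            (∑ i, v i * r i ω * (if g i = j then (1 : ℝ) else 0)))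
          - ∑ i, u i * v i) ^ 2 ∂μ) / ((k : ℝ) ^ D)
      = (s - 1) * (∑ i, (u i) ^ 2 * (v i) ^ 2)
        + (1 / k) *
          ((∑ i, u i * v i) ^ 2 + (∑ i, (u i) ^ 2) * (∑ i, (v i) ^ 2)
            - 2 * ∑ i, (u i) ^ 2 * (v i) ^ 2) := by
  classical
  have hk0 : (k:ℝ) ≠ 0 := Nat.cast_ne_zero.mpr hk.ne'
  have hkD : ((k:ℝ))^D ≠ 0 := pow_ne_zero _ hk0
  set A : ℝ := ∑ i, u i * v i with hA
  -- shorthand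
  set C : (Fin D → Fin k) → Fin D × Fin D → ℝ :=
    fun g p => u p.1 * v p.2 * (if g p.1 = g p.2 then (1:ℝ) else 0) with hC
  set M4 : Fin D × Fin D → Fin D × Fin D → ℝ := fun p q =>
    (if p.1 = p.2 then (1:ℝ) else 0) * (if q.1 = q.2 then 1 else 0)
    + (if p.1 = q.1 then (1:ℝ) else 0) * (if p.2 = q.2 then 1 else 0)
    + (if p.1 = q.2 then (1:ℝ) else 0) * (if p.2 = q.1 then 1 else 0)
    + (s - 3) * ((if p.1 = p.2 then (1:ℝ) else 0) * (if p.1 = q.1 then 1 else 0)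
        * (if p.1 = q.2 then 1 else 0)) with hM4
  set F : Fin D × Fin D → Fin D × Fin D → ℝ := fun p q =>
    (if p.1 = p.2 then (1:ℝ) else 0) * (if q.1 = q.2 then 1 else 0)
    + (s - 1) * ((if p.1 = p.2 then (1:ℝ) else 0) * (if p.1 = q.1 then 1 else 0)
        * (if p.1 = q.2 then 1 else 0))
    + (1/(k:ℝ)) * ((if p.1 = q.1 then (1:ℝ) else 0) * (if p.2 = q.2 then 1 else 0)
        + (if p.1 = q.2 then (1:ℝ) else 0) * (if p.2 = q.1 then 1 else 0)
        - 2 * ((if p.1 = p.2 then (1:ℝ) else 0) * (if p.1 = q.1 then 1 else 0)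
            * (if p.1 = q.2 then 1 else 0))) with hF
  -- Step 1: rewrite the inner double sum
  have hswap : ∀ (g : Fin D → Fin k) (ω : Ω),
      (∑ j : Fin k,
          (∑ i, u i * r i ω * (if g i = j then (1 : ℝ) else 0)) *
          (∑ i, v i * r i ω * (if g i = j then (1 : ℝ) else 0)))
      = ∑ p : Fin D × Fin D, C g p * (r p.1 ω * r p.2 ω) := by
    intro g ω
    rw [Fintype.sum_prod_type]
    have h1 : ∀ j : Fin k,
        (∑ i, u i * r i ω * (if g i = j then (1 : ℝ) else 0)) *
          (∑ i, v i * r i ω * (if g i = j then (1 : ℝ) else 0))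
        = ∑ a, ∑ b, (u a * r a ω * (if g a = j then (1:ℝ) else 0)) *
            (v b * r b ω * (if g b = j then (1:ℝ) else 0)) := fun j =>
      Finset.sum_mul_sum _ _ _ _
    rw [Finset.sum_congr rfl fun j _ => h1 j, Finset.sum_comm]
    refine Finset.sum_congr rfl fun a _ => ?_
    rw [Finset.sum_comm]
    refine Finset.sum_congr rfl fun b _ => ?_
    have h2 : ∀ j : Fin k,
        (u a * r a ω * (if g a = j then (1:ℝ) else 0)) *
          (v b * r b ω * (if g b = j then (1:ℝ) else 0))
        = (u a * v b * (r a ω * r b ω)) *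
            ((if g a = j then (1:ℝ) else 0) * (if g b = j then (1:ℝ) else 0)) := by
      intro j; ring
    rw [Finset.sum_congr rfl fun j _ => h2 j, ← Finset.mul_sum, oporp_sum_delta]
    simp only [hC]
    ring
  -- moment facts
  have h2m := fun (a b : Fin D) =>
    oporp_mom2 hrmeas hindep hL4 hm1 hm2 a b
  have h4m := fun (p q : Fin D × Fin D) =>
    oporp_mom4 hrmeas hindep hL4 hm1 hm2 hm3 hm4 p.1 p.2 q.1 q.2
  have h4mval : ∀ p q : Fin D × Fin D,
      ∫ ω, r p.1 ω * r p.2 ω * (r q.1 ω * r q.2 ω) ∂μ = M4 p q := by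
    intro p q
    rw [(h4m p q).2, hM4]
  -- Step 2: integral for fixed g
  have hIg : ∀ g : Fin D → Fin k,
      (∫ ω, ((∑ j : Fin k,
          (∑ i, u i * r i ω * (if g i = j then (1 : ℝ) else 0)) *
          (∑ i, v i * r i ω * (if g i = j then (1 : ℝ) else 0))) - A) ^ 2 ∂μ)
      = (∑ p : Fin D × Fin D, ∑ q : Fin D × Fin D, (C g p * C g q) * M4 p q) - A^2 := by
    intro g
    have hpt : (fun ω => ((∑ j : Fin k,
        (∑ i, u i * r i ω * (if g i = j then (1 : ℝ) else 0)) *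
        (∑ i, v i * r i ω * (if g i = j then (1 : ℝ) else 0))) - A) ^ 2)
        = fun ω => (∑ p : Fin D × Fin D, ∑ q : Fin D × Fin D,
            (C g p * C g q) * (r p.1 ω * r p.2 ω * (r q.1 ω * r q.2 ω)))
          - (2*A) * (∑ p : Fin D × Fin D, C g p * (r p.1 ω * r p.2 ω)) + A^2 := by
      funext ω
      rw [hswap g ω, sub_sq]
      have hsq : (∑ p : Fin D × Fin D, C g p * (r p.1 ω * r p.2 ω))^2
          = ∑ p : Fin D × Fin D, ∑ q : Fin D × Fin D,
              (C g p * C g q) * (r p.1 ω * r p.2 ω * (r q.1 ω * r q.2 ω)) := by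
        rw [sq, Finset.sum_mul_sum]
        exact Finset.sum_congr rfl fun p _ => Finset.sum_congr rfl fun q _ => by ring
      rw [hsq]; ring
    have int4 : ∀ p q : Fin D × Fin D,
        Integrable (fun ω => r p.1 ω * r p.2 ω * (r q.1 ω * r q.2 ω)) μ :=
      fun p q => (h4m p q).1
    have intD : Integrable (fun ω => ∑ p : Fin D × Fin D, ∑ q : Fin D × Fin D,
        (C g p * C g q) * (r p.1 ω * r p.2 ω * (r q.1 ω * r q.2 ω))) μ :=
      integrable_finset_sum _ fun p _ => integrable_finset_sum _ fun q _ =>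
        ((int4 p q).const_mul _)
    have intS : Integrable (fun ω => (2*A) * (∑ p : Fin D × Fin D,
        C g p * (r p.1 ω * r p.2 ω))) μ :=
      (integrable_finset_sum _ fun p _ => ((h2m p.1 p.2).1.const_mul _)).const_mul _
    have intDS : Integrable (fun ω =>
        (∑ p : Fin D × Fin D, ∑ q : Fin D × Fin D,
          (C g p * C g q) * (r p.1 ω * r p.2 ω * (r q.1 ω * r q.2 ω)))
        - (2*A) * (∑ p : Fin D × Fin D, C g p * (r p.1 ω * r p.2 ω))) μ := intD.sub intS
    rw [hpt, integral_add intDS (integrable_const _),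
      integral_sub intD intS, integral_const, probReal_univ, smul_eq_mul,
      one_mul]
    have hD : (∫ ω, ∑ p : Fin D × Fin D, ∑ q : Fin D × Fin D,
        (C g p * C g q) * (r p.1 ω * r p.2 ω * (r q.1 ω * r q.2 ω)) ∂μ)
        = ∑ p : Fin D × Fin D, ∑ q : Fin D × Fin D, (C g p * C g q) * M4 p q := by
      rw [integral_finset_sum _ fun p _ => integrable_finset_sum _ fun q _ =>
        ((int4 p q).const_mul _)]
      refine Finset.sum_congr rfl fun p _ => ?_
      rw [integral_finset_sum _ fun q _ => ((int4 p q).const_mul _)]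
      refine Finset.sum_congr rfl fun q _ => ?_
      rw [integral_const_mul, h4mval p q]
    have hS : (∫ ω, (2*A) * (∑ p : Fin D × Fin D, C g p * (r p.1 ω * r p.2 ω)) ∂μ)
        = (2*A) * A := by
      rw [integral_const_mul,
        integral_finset_sum _ fun p _ => ((h2m p.1 p.2).1.const_mul _)]
      congr 1
      have : ∀ p : Fin D × Fin D,
          (∫ ω, C g p * (r p.1 ω * r p.2 ω) ∂μ)
          = C g p * (if p.1 = p.2 then (1:ℝ) else 0) := by
        intro p
        rw [integral_const_mul, (h2m p.1 p.2).2]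
      rw [Finset.sum_congr rfl fun p _ => this p, Fintype.sum_prod_type]
      simp only [hC]
      simp [Finset.sum_ite_eq, mul_ite, mul_one, mul_zero, hA]
    rw [hD, hS]
    ring
  -- Step 3: sum over g
  have hTot : (∑ g : Fin D → Fin k, ∫ ω,
      ((∑ j : Fin k,
          (∑ i, u i * r i ω * (if g i = j then (1 : ℝ) else 0)) *
          (∑ i, v i * r i ω * (if g i = j then (1 : ℝ) else 0)))
        - A) ^ 2 ∂μ)
      = (∑ p : Fin D × Fin D, ∑ q : Fin D × Fin D,
          (u p.1 * v p.2 * (u q.1 * v q.2)) * ((k:ℝ)^D * F p q)) - (k:ℝ)^D * A^2 := by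
    rw [Finset.sum_congr rfl fun g _ => hIg g, Finset.sum_sub_distrib, Finset.sum_const,
      oporp_card_fun, nsmul_eq_mul, Nat.cast_pow]
    congr 1
    rw [Finset.sum_comm]
    refine Finset.sum_congr rfl fun p _ => ?_
    rw [Finset.sum_comm]
    refine Finset.sum_congr rfl fun q _ => ?_
    have hre : ∀ g : Fin D → Fin k, (C g p * C g q) * M4 p q
        = (u p.1 * v p.2 * (u q.1 * v q.2)) *
            (((if g p.1 = g p.2 then (1:ℝ) else 0) * (if g q.1 = g q.2 then 1 else 0))
              * M4 p q) := by
      intro g; simp only [hC]; ring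
    rw [Finset.sum_congr rfl fun g _ => hre g, ← Finset.mul_sum, ← Finset.sum_mul]
    congr 1
    rw [hM4, hF]
    exact oporp_key hk s p.1 p.2 q.1 q.2
  -- Step 4: evaluate the deterministic sums
  have S1 : (∑ p : Fin D × Fin D, ∑ q : Fin D × Fin D,
      (u p.1 * v p.2 * (u q.1 * v q.2)) *
        ((if p.1 = p.2 then (1:ℝ) else 0) * (if q.1 = q.2 then 1 else 0))) = A^2 := by
    have hterm : ∀ p q : Fin D × Fin D, (u p.1 * v p.2 * (u q.1 * v q.2)) *
        ((if p.1 = p.2 then (1:ℝ) else 0) * (if q.1 = q.2 then 1 else 0))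
        = (u p.1 * v p.2 * (if p.1 = p.2 then (1:ℝ) else 0)) *
          (u q.1 * v q.2 * (if q.1 = q.2 then (1:ℝ) else 0)) := fun p q => by ring
    rw [Finset.sum_congr rfl fun p _ => Finset.sum_congr rfl fun q _ => hterm p q,
      ← Finset.sum_mul_sum]
    have hdiag : (∑ p : Fin D × Fin D, u p.1 * v p.2 * (if p.1 = p.2 then (1:ℝ) else 0))
        = A := by
      rw [Fintype.sum_prod_type]
      simp [mul_ite, Finset.sum_ite_eq, hA]
    rw [hdiag, sq]
  have S2 : (∑ p : Fin D × Fin D, ∑ q : Fin D × Fin D,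
      (u p.1 * v p.2 * (u q.1 * v q.2)) *
        ((if p.1 = p.2 then (1:ℝ) else 0) * (if p.1 = q.1 then 1 else 0)
          * (if p.1 = q.2 then 1 else 0))) = ∑ i, (u i)^2 * (v i)^2 := by
    simp only [Fintype.sum_prod_type, mul_ite, ite_mul, mul_zero, zero_mul, mul_one, one_mul,
      Finset.sum_ite_eq, Finset.sum_ite_eq', Finset.mem_univ, if_true]
    exact Finset.sum_congr rfl fun i _ => by ring
  have S3 : (∑ p : Fin D × Fin D, ∑ q : Fin D × Fin D,
      (u p.1 * v p.2 * (u q.1 * v q.2)) *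
        ((if p.1 = q.1 then (1:ℝ) else 0) * (if p.2 = q.2 then 1 else 0)))
      = (∑ i, (u i)^2) * (∑ i, (v i)^2) := by
    rw [Finset.sum_mul_sum]
    simp only [Fintype.sum_prod_type, mul_ite, ite_mul, mul_zero, zero_mul, mul_one, one_mul,
      Finset.sum_ite_eq, Finset.sum_ite_eq', Finset.mem_univ, if_true]
    exact Finset.sum_congr rfl fun i _ => Finset.sum_congr rfl fun j _ => by ring
  have S4 : (∑ p : Fin D × Fin D, ∑ q : Fin D × Fin D,
      (u p.1 * v p.2 * (u q.1 * v q.2)) *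
        ((if p.1 = q.2 then (1:ℝ) else 0) * (if p.2 = q.1 then 1 else 0))) = A^2 := by
    rw [hA, sq, Finset.sum_mul_sum]
    simp only [Fintype.sum_prod_type, mul_ite, ite_mul, mul_zero, zero_mul, mul_one, one_mul,
      Finset.sum_ite_eq, Finset.sum_ite_eq', Finset.mem_univ, if_true]
    refine Finset.sum_congr rfl fun i _ => Finset.sum_congr rfl fun j _ => ?_
    rw [Finset.sum_comm]
    simp only [Finset.sum_ite_eq, Finset.mem_univ, if_true]
    ring
  -- Step 5: put everything together
  have hSum : (∑ p : Fin D × Fin D, ∑ q : Fin D × Fin D,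
      (u p.1 * v p.2 * (u q.1 * v q.2)) * ((k:ℝ)^D * F p q))
      = (k:ℝ)^D * (A^2 + (s-1) * (∑ i, (u i)^2 * (v i)^2)
          + (1/(k:ℝ)) * ((∑ i, (u i)^2) * (∑ i, (v i)^2) + A^2
              - 2 * ∑ i, (u i)^2 * (v i)^2)) := by
    have expand : ∀ p q : Fin D × Fin D,
        (u p.1 * v p.2 * (u q.1 * v q.2)) * ((k:ℝ)^D * F p q)
        = (k:ℝ)^D * ((u p.1 * v p.2 * (u q.1 * v q.2)) *
              ((if p.1 = p.2 then (1:ℝ) else 0) * (if q.1 = q.2 then 1 else 0)))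
          + ((k:ℝ)^D * (s-1)) * ((u p.1 * v p.2 * (u q.1 * v q.2)) *
              ((if p.1 = p.2 then (1:ℝ) else 0) * (if p.1 = q.1 then 1 else 0)
                * (if p.1 = q.2 then 1 else 0)))
          + ((k:ℝ)^D * (1/(k:ℝ))) * ((u p.1 * v p.2 * (u q.1 * v q.2)) *
              ((if p.1 = q.1 then (1:ℝ) else 0) * (if p.2 = q.2 then 1 else 0)))
          + ((k:ℝ)^D * (1/(k:ℝ))) * ((u p.1 * v p.2 * (u q.1 * v q.2)) *
              ((if p.1 = q.2 then (1:ℝ) else 0) * (if p.2 = q.1 then 1 else 0)))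
          + (-((k:ℝ)^D * (1/(k:ℝ)) * 2)) * ((u p.1 * v p.2 * (u q.1 * v q.2)) *
              ((if p.1 = p.2 then (1:ℝ) else 0) * (if p.1 = q.1 then 1 else 0)
                * (if p.1 = q.2 then 1 else 0))) := by
      intro p q
      simp only [hF]
      ring
    rw [Finset.sum_congr rfl fun p _ => Finset.sum_congr rfl fun q _ => expand p q]
    simp only [Finset.sum_add_distrib, ← Finset.mul_sum]
    rw [S1, S2, S3, S4]
    ring
  rw [hTot, hSum, div_eq_iff hkD]
  field_simp
  ring
end

section
/- Under the single-projection setting, E(x^2 y^2) = s Σ_i u_i^2 v_i^2 + Σ_{i≠i'} (u_i^2 v_{i'}^2 + 2 u_i v_i u_{i'} v_{i'}), where x = Σ_i u_i r_i and y = Σ_i v_i r_i. -/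
open MeasureTheory ProbabilityTheory Finset ENNReal

lemma aux_int_pow4 {Ω : Type*} [MeasurableSpace Ω] {μ : Measure Ω}
    {f : Ω → ℝ} (hf : MemLp f 4 μ) : Integrable (fun ω => f ω ^ 4) μ := by
  have h := hf.integrable_norm_rpow (by norm_num) (by norm_num)
  have h4 : (4:ℝ≥0∞).toReal = ((4:ℕ):ℝ) := by norm_num
  rw [h4] at h
  simp only [Real.rpow_natCast, Real.norm_eq_abs, pow_abs] at h
  refine h.congr (Filter.Eventually.of_forall fun ω => ?_)
  exact abs_of_nonneg (by positivity : (0:ℝ) ≤ f ω ^ 4)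

lemma aux_int_mul2 {Ω : Type*} [MeasurableSpace Ω] {μ : Measure Ω} [IsProbabilityMeasure μ]
    {f g : Ω → ℝ} (mf : Measurable f) (mg : Measurable g)
    (hf : MemLp f 4 μ) (hg : MemLp g 4 μ) :
    Integrable (fun ω => f ω * g ω) μ := by
  have hint : Integrable (fun ω => f ω ^ 4 + g ω ^ 4 + 1) μ :=
    ((aux_int_pow4 hf).add (aux_int_pow4 hg)).add (integrable_const 1)
  refine hint.mono' ((mf.mul mg).aestronglyMeasurable) ?_
  filter_upwards with ω
  rw [Real.norm_eq_abs, abs_le]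
  constructor <;> nlinarith [sq_nonneg (f ω - g ω), sq_nonneg (f ω + g ω),
    sq_nonneg (f ω ^ 2 - 1), sq_nonneg (g ω ^ 2 - 1), sq_nonneg (f ω), sq_nonneg (g ω)]

lemma aux_int_mul3 {Ω : Type*} [MeasurableSpace Ω] {μ : Measure Ω} [IsProbabilityMeasure μ]
    {f g h : Ω → ℝ} (mf : Measurable f) (mg : Measurable g) (mh : Measurable h)
    (hf : MemLp f 4 μ) (hg : MemLp g 4 μ) (hh : MemLp h 4 μ) :
    Integrable (fun ω => f ω * (g ω * h ω)) μ := by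
  have hint : Integrable (fun ω => f ω ^ 4 + g ω ^ 4 + h ω ^ 4 + 1) μ :=
    (((aux_int_pow4 hf).add (aux_int_pow4 hg)).add (aux_int_pow4 hh)).add (integrable_const 1)
  refine hint.mono' ((mf.mul (mg.mul mh)).aestronglyMeasurable) ?_
  filter_upwards with ω
  rw [Real.norm_eq_abs, abs_le]
  constructor <;> nlinarith [sq_nonneg (f ω * g ω - h ω), sq_nonneg (f ω * g ω + h ω),
    sq_nonneg (f ω ^ 2 - g ω ^ 2), sq_nonneg (f ω ^ 2 + g ω ^ 2),
    sq_nonneg (h ω ^ 2 - 1), sq_nonneg (f ω * g ω), sq_nonneg (h ω)]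

lemma aux_int_mul4 {Ω : Type*} [MeasurableSpace Ω] {μ : Measure Ω} [IsProbabilityMeasure μ]
    {f g h k : Ω → ℝ} (mf : Measurable f) (mg : Measurable g) (mh : Measurable h)
    (mk : Measurable k)
    (hf : MemLp f 4 μ) (hg : MemLp g 4 μ) (hh : MemLp h 4 μ) (hk : MemLp k 4 μ) :
    Integrable (fun ω => (f ω * g ω) * (h ω * k ω)) μ := by
  have hint : Integrable (fun ω => f ω ^ 4 + g ω ^ 4 + h ω ^ 4 + k ω ^ 4 + 1) μ :=
    ((((aux_int_pow4 hf).add (aux_int_pow4 hg)).add (aux_int_pow4 hh)).add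
      (aux_int_pow4 hk)).add (integrable_const 1)
  refine hint.mono' (((mf.mul mg).mul (mh.mul mk)).aestronglyMeasurable) ?_
  filter_upwards with ω
  rw [Real.norm_eq_abs, abs_le]
  constructor <;> nlinarith [sq_nonneg (f ω * g ω - h ω * k ω), sq_nonneg (f ω * g ω + h ω * k ω),
    sq_nonneg (f ω ^ 2 - g ω ^ 2), sq_nonneg (h ω ^ 2 - k ω ^ 2),
    sq_nonneg (f ω ^ 2 + g ω ^ 2), sq_nonneg (h ω ^ 2 + k ω ^ 2),
    sq_nonneg (f ω * g ω), sq_nonneg (h ω * k ω)]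

/-- Single projection: for `x = Σ u_i r_i`, `y = Σ v_i r_i` with `r_i` independent,
`E(r_i)=0`, `E(r_i²)=1`, `E(r_i³)=0`, `E(r_i⁴)=s`, we have
`E(x²y²) = s Σ u_i²v_i² + Σ_{i≠i'} (u_i²v_{i'}² + 2 u_i v_i u_{i'} v_{i'})`. -/
theorem single_projection_x2y2
    {Ω : Type*} [MeasurableSpace Ω] (μ : Measure Ω) [IsProbabilityMeasure μ]
    {D : ℕ} (u v : Fin D → ℝ) (s : ℝ) (r : Fin D → Ω → ℝ)
    (hrmeas : ∀ i, Measurable (r i))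
    (hindep : iIndepFun r μ)
    (hL4 : ∀ i, MemLp (r i) 4 μ)
    (hm1 : ∀ i, ∫ ω, r i ω ∂μ = 0)
    (hm2 : ∀ i, ∫ ω, (r i ω) ^ 2 ∂μ = 1)
    (hm3 : ∀ i, ∫ ω, (r i ω) ^ 3 ∂μ = 0)
    (hm4 : ∀ i, ∫ ω, (r i ω) ^ 4 ∂μ = s) :
    ∫ ω, (∑ i, u i * r i ω) ^ 2 * (∑ i, v i * r i ω) ^ 2 ∂μ
      = s * ∑ i, (u i) ^ 2 * (v i) ^ 2
        + ∑ i, ∑ i', (if i ≠ i' then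
            (u i) ^ 2 * (v i') ^ 2 + 2 * (u i * v i) * (u i' * v i') else 0) := by
  classical
  -- integrability facts
  have i1 : ∀ i, Integrable (r i) μ := fun i =>
    memLp_one_iff_integrable.mp ((hL4 i).mono_exponent (by norm_num))
  have i2 : ∀ a b, Integrable (fun ω => r a ω * r b ω) μ := fun a b =>
    aux_int_mul2 (hrmeas a) (hrmeas b) (hL4 a) (hL4 b)
  have i3 : ∀ a b c, Integrable (fun ω => r a ω * (r b ω * r c ω)) μ := fun a b c =>
    aux_int_mul3 (hrmeas a) (hrmeas b) (hrmeas c) (hL4 a) (hL4 b) (hL4 c)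
  have i4 : ∀ a b c d, Integrable (fun ω => (r a ω * r b ω) * (r c ω * r d ω)) μ :=
    fun a b c d =>
      aux_int_mul4 (hrmeas a) (hrmeas b) (hrmeas c) (hrmeas d) (hL4 a) (hL4 b) (hL4 c) (hL4 d)
  have ip2 : ∀ a, Integrable (fun ω => r a ω ^ 2) μ := fun a =>
    (i2 a a).congr (Filter.Eventually.of_forall fun ω => by ring)
  have ip3 : ∀ a, Integrable (fun ω => r a ω ^ 3) μ := fun a =>
    (i3 a a a).congr (Filter.Eventually.of_forall fun ω => by ring)
  -- pairwise moment computations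
  have epair : ∀ a b, a ≠ b → ∫ ω, r a ω * r b ω ∂μ = 0 := by
    intro a b hab
    have h : ∫ ω, r a ω * r b ω ∂μ = (∫ ω, r a ω ∂μ) * ∫ ω, r b ω ∂μ :=
      (hindep.indepFun hab).integral_fun_mul_eq_mul_integral (i1 a).aestronglyMeasurable (i1 b).aestronglyMeasurable
    rw [h, hm1 a, hm1 b, mul_zero]
  have e22 : ∀ a b, a ≠ b → ∫ ω, r a ω ^ 2 * r b ω ^ 2 ∂μ = 1 := by
    intro a b hab
    have hi : IndepFun (fun ω => r a ω ^ 2) (fun ω => r b ω ^ 2) μ :=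
      (hindep.indepFun hab).comp (measurable_id.pow_const 2) (measurable_id.pow_const 2)
    have h : ∫ ω, r a ω ^ 2 * r b ω ^ 2 ∂μ = (∫ ω, r a ω ^ 2 ∂μ) * ∫ ω, r b ω ^ 2 ∂μ :=
      hi.integral_fun_mul_eq_mul_integral (ip2 a).aestronglyMeasurable (ip2 b).aestronglyMeasurable
    rw [h, hm2 a, hm2 b, mul_one]
  have e31 : ∀ a b, a ≠ b → ∫ ω, r a ω ^ 3 * r b ω ∂μ = 0 := by
    intro a b hab
    have hi : IndepFun (fun ω => r a ω ^ 3) (r b) μ :=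
      (hindep.indepFun hab).comp (measurable_id.pow_const 3) measurable_id
    have h : ∫ ω, r a ω ^ 3 * r b ω ∂μ = (∫ ω, r a ω ^ 3 ∂μ) * ∫ ω, r b ω ∂μ :=
      hi.integral_fun_mul_eq_mul_integral (ip3 a).aestronglyMeasurable (i1 b).aestronglyMeasurable
    rw [h, hm3 a, zero_mul]
  have e211 : ∀ a b c, b ≠ a → c ≠ a → b ≠ c →
      ∫ ω, r a ω ^ 2 * (r b ω * r c ω) ∂μ = 0 := by
    intro a b c hba hca hbc
    have hi : IndepFun (fun ω => r a ω ^ 2) (fun ω => r b ω * r c ω) μ :=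
      ((hindep.indepFun_prodMk hrmeas b c a hba hca).comp
        (measurable_fst.mul measurable_snd) (measurable_id.pow_const 2)).symm
    have h : ∫ ω, r a ω ^ 2 * (r b ω * r c ω) ∂μ
        = (∫ ω, r a ω ^ 2 ∂μ) * ∫ ω, r b ω * r c ω ∂μ :=
      hi.integral_fun_mul_eq_mul_integral (ip2 a).aestronglyMeasurable (i2 b c).aestronglyMeasurable
    rw [h, epair b c hbc, mul_zero]
  have e1111 : ∀ a b c d, a ≠ c → a ≠ d → b ≠ c → b ≠ d →
      ∫ ω, (r a ω * r b ω) * (r c ω * r d ω) ∂μ =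
        (∫ ω, r a ω * r b ω ∂μ) * (∫ ω, r c ω * r d ω ∂μ) := by
    intro a b c d h1 h2 h3 h4
    exact (hindep.indepFun_mul_mul hrmeas a b c d h1 h2 h3 h4).integral_fun_mul_eq_mul_integral
      (i2 a b).aestronglyMeasurable (i2 c d).aestronglyMeasurable
  -- the key fourth-moment formula
  have key : ∀ a b c d : Fin D, ∫ ω, (r a ω * r b ω) * (r c ω * r d ω) ∂μ =
      (if a = b ∧ c = d then (1:ℝ) else 0) + (if a = c ∧ b = d then 1 else 0)
      + (if a = d ∧ b = c then 1 else 0)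
      + (if a = b ∧ a = c ∧ a = d then s - 3 else 0) := by
    intro a b c d
    by_cases hab : a = b
    · subst hab
      by_cases hcd : c = d
      · subst hcd
        by_cases hac : a = c
        · subst hac
          have h : ∫ ω, (r a ω * r a ω) * (r a ω * r a ω) ∂μ = ∫ ω, r a ω ^ 4 ∂μ :=
            integral_congr_ae (Filter.Eventually.of_forall fun ω => by ring)
          rw [h, hm4 a]
          simp; try ring
        · have h : ∫ ω, (r a ω * r a ω) * (r c ω * r c ω) ∂μ = ∫ ω, r a ω ^ 2 * r c ω ^ 2 ∂μ :=
            integral_congr_ae (Filter.Eventually.of_forall fun ω => by ring)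
          rw [h, e22 a c hac]
          simp [hac, Ne.symm hac]; try ring
      · by_cases hac : a = c
        · subst hac
          have had : a ≠ d := hcd
          have h : ∫ ω, (r a ω * r a ω) * (r a ω * r d ω) ∂μ = ∫ ω, r a ω ^ 3 * r d ω ∂μ :=
            integral_congr_ae (Filter.Eventually.of_forall fun ω => by ring)
          rw [h, e31 a d had]
          simp [had, Ne.symm had]; try ring
        · by_cases had : a = d
          · subst had
            have h : ∫ ω, (r a ω * r a ω) * (r c ω * r a ω) ∂μ = ∫ ω, r a ω ^ 3 * r c ω ∂μ :=
              integral_congr_ae (Filter.Eventually.of_forall fun ω => by ring)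
            rw [h, e31 a c hac]
            simp [hac, Ne.symm hac]; try ring
          · have h : ∫ ω, (r a ω * r a ω) * (r c ω * r d ω) ∂μ
                = ∫ ω, r a ω ^ 2 * (r c ω * r d ω) ∂μ :=
              integral_congr_ae (Filter.Eventually.of_forall fun ω => by ring)
            rw [h, e211 a c d (Ne.symm hac) (Ne.symm had) hcd]
            simp [hac, had, hcd, Ne.symm hac, Ne.symm had, Ne.symm hcd]; try ring
    · by_cases hcd : c = d
      · subst hcd
        by_cases hca : c = a
        · subst hca
          have h : ∫ ω, (r c ω * r b ω) * (r c ω * r c ω) ∂μ = ∫ ω, r c ω ^ 3 * r b ω ∂μ :=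
            integral_congr_ae (Filter.Eventually.of_forall fun ω => by ring)
          rw [h, e31 c b hab]
          simp [hab, Ne.symm hab]; try ring
        · by_cases hcb : c = b
          · subst hcb
            have h : ∫ ω, (r a ω * r c ω) * (r c ω * r c ω) ∂μ = ∫ ω, r c ω ^ 3 * r a ω ∂μ :=
              integral_congr_ae (Filter.Eventually.of_forall fun ω => by ring)
            rw [h, e31 c a hca]
            simp [hab, hca, Ne.symm hab, Ne.symm hca]; try ring
          · have h : ∫ ω, (r a ω * r b ω) * (r c ω * r c ω) ∂μ
                = ∫ ω, r c ω ^ 2 * (r a ω * r b ω) ∂μ :=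
              integral_congr_ae (Filter.Eventually.of_forall fun ω => by ring)
            rw [h, e211 c a b (Ne.symm hca) (Ne.symm hcb) hab]
            simp [hab, hca, hcb, Ne.symm hab, Ne.symm hca, Ne.symm hcb]; try ring
      · by_cases hac : a = c
        · subst hac
          by_cases hbd : b = d
          · subst hbd
            have h : ∫ ω, (r a ω * r b ω) * (r a ω * r b ω) ∂μ
                = ∫ ω, r a ω ^ 2 * r b ω ^ 2 ∂μ :=
              integral_congr_ae (Filter.Eventually.of_forall fun ω => by ring)
            rw [h, e22 a b hab]
            simp [hab, Ne.symm hab]; try ring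
          · have h : ∫ ω, (r a ω * r b ω) * (r a ω * r d ω) ∂μ
                = ∫ ω, r a ω ^ 2 * (r b ω * r d ω) ∂μ :=
              integral_congr_ae (Filter.Eventually.of_forall fun ω => by ring)
            rw [h, e211 a b d (Ne.symm hab) (Ne.symm hcd) hbd]
            simp [hab, hbd, hcd, Ne.symm hab, Ne.symm hbd, Ne.symm hcd]; try ring
        · by_cases had : a = d
          · subst had
            by_cases hbc : b = c
            · subst hbc
              have h : ∫ ω, (r a ω * r b ω) * (r b ω * r a ω) ∂μ
                  = ∫ ω, r a ω ^ 2 * r b ω ^ 2 ∂μ :=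
                integral_congr_ae (Filter.Eventually.of_forall fun ω => by ring)
              rw [h, e22 a b hab]
              simp [hab, Ne.symm hab]; try ring
            · have h : ∫ ω, (r a ω * r b ω) * (r c ω * r a ω) ∂μ
                  = ∫ ω, r a ω ^ 2 * (r b ω * r c ω) ∂μ :=
                integral_congr_ae (Filter.Eventually.of_forall fun ω => by ring)
              rw [h, e211 a b c (Ne.symm hab) (Ne.symm hac) hbc]
              simp [hab, hac, hbc, Ne.symm hab, Ne.symm hac, Ne.symm hbc]; try ring
          · by_cases hbc : b = c
            · subst hbc
              have hbd : b ≠ d := hcd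
              have h : ∫ ω, (r a ω * r b ω) * (r b ω * r d ω) ∂μ
                  = ∫ ω, r b ω ^ 2 * (r a ω * r d ω) ∂μ :=
                integral_congr_ae (Filter.Eventually.of_forall fun ω => by ring)
              rw [h, e211 b a d hab (Ne.symm hbd) had]
              simp [hab, had, hcd, Ne.symm hab, Ne.symm had, Ne.symm hcd]; try ring
            · by_cases hbd : b = d
              · subst hbd
                have h : ∫ ω, (r a ω * r b ω) * (r c ω * r b ω) ∂μ
                    = ∫ ω, r b ω ^ 2 * (r a ω * r c ω) ∂μ :=
                  integral_congr_ae (Filter.Eventually.of_forall fun ω => by ring)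
                rw [h, e211 b a c hab (Ne.symm hbc) hac]
                simp [hab, hac, hbc, hcd, Ne.symm hab, Ne.symm hac, Ne.symm hbc, Ne.symm hcd]; try ring
              · rw [e1111 a b c d hac had hbc hbd, epair a b hab, zero_mul]
                simp [hab, hac, had, hbc, hbd, hcd, Ne.symm hab, Ne.symm hac, Ne.symm had, Ne.symm hbc, Ne.symm hbd, Ne.symm hcd]; try ring
  -- expand the square of sums
  have hexp : (fun ω => (∑ i, u i * r i ω) ^ 2 * (∑ i, v i * r i ω) ^ 2)
      = fun ω => ∑ a, ∑ b, ∑ c, ∑ d,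
          (u a * u c * (v b * v d)) * ((r a ω * r c ω) * (r b ω * r d ω)) := by
    funext ω
    have h0 : (∑ i, u i * r i ω) ^ 2 * (∑ i, v i * r i ω) ^ 2
        = ((∑ i, u i * r i ω) * (∑ i, u i * r i ω))
          * ((∑ i, v i * r i ω) * (∑ i, v i * r i ω)) := by ring
    rw [h0, Finset.sum_mul_sum, Finset.sum_mul_sum, Finset.sum_mul_sum]
    refine Finset.sum_congr rfl fun a _ => Finset.sum_congr rfl fun b _ => ?_
    rw [Finset.sum_mul_sum]
    exact Finset.sum_congr rfl fun c _ => Finset.sum_congr rfl fun d _ => by ring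
  rw [hexp]
  have iquad : ∀ a b c d : Fin D, Integrable
      (fun ω => (u a * u c * (v b * v d)) * ((r a ω * r c ω) * (r b ω * r d ω))) μ :=
    fun a b c d => (i4 a c b d).const_mul _
  rw [integral_finset_sum _ (fun a _ => integrable_finset_sum _ (fun b _ =>
    integrable_finset_sum _ (fun c _ => integrable_finset_sum _ (fun d _ => iquad a b c d))))]
  have hswap : ∀ a, ∫ ω, ∑ b, ∑ c, ∑ d,
      (u a * u c * (v b * v d)) * ((r a ω * r c ω) * (r b ω * r d ω)) ∂μ
      = ∑ b, ∑ c, ∑ d, (u a * u c * (v b * v d)) *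
          ((if a = c ∧ b = d then (1:ℝ) else 0) + (if a = b ∧ c = d then 1 else 0)
            + (if a = d ∧ c = b then 1 else 0) + (if a = c ∧ a = b ∧ a = d then s - 3 else 0)) := by
    intro a
    rw [integral_finset_sum _ (fun b _ => integrable_finset_sum _ (fun c _ =>
      integrable_finset_sum _ (fun d _ => iquad a b c d)))]
    refine Finset.sum_congr rfl fun b _ => ?_
    rw [integral_finset_sum _ (fun c _ => integrable_finset_sum _ (fun d _ => iquad a b c d))]
    refine Finset.sum_congr rfl fun c _ => ?_
    rw [integral_finset_sum _ (fun d _ => iquad a b c d)]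
    refine Finset.sum_congr rfl fun d _ => ?_
    rw [integral_const_mul, key a c b d]
  simp_rw [hswap]
  -- now pure algebra with finite sums
  simp only [mul_add, Finset.sum_add_distrib, mul_ite, mul_one, mul_zero, ite_and,
    Finset.sum_ite_irrel, Finset.sum_ite_eq, Finset.sum_ite_eq', Finset.mem_univ, if_true,
    Finset.sum_const_zero, add_zero, zero_add]
  have hsplit : ∀ (B : Fin D → Fin D → ℝ),
      (∑ i, ∑ j, if i ≠ j then B i j else 0) = (∑ i, ∑ j, B i j) - ∑ i, B i i := by
    intro B
    have h1 : ∀ i j : Fin D, (if i ≠ j then B i j else 0)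
        = B i j - (if i = j then B i j else 0) := by
      intro i j; by_cases h : i = j <;> simp [h]
    simp_rw [h1, Finset.sum_sub_distrib, Finset.sum_ite_eq, Finset.mem_univ, if_true]
  simp only [hsplit]
  have c1 : (∑ x : Fin D, ∑ y : Fin D, u x * u x * (v y * v y))
      = (∑ x : Fin D, u x ^ 2) * (∑ y : Fin D, v y ^ 2) := by
    rw [Finset.sum_mul_sum]
    exact Finset.sum_congr rfl fun x _ => Finset.sum_congr rfl fun y _ => by ring
  have c2 : (∑ x : Fin D, ∑ y : Fin D, u x * u y * (v x * v y))
      = (∑ x : Fin D, u x * v x) * (∑ y : Fin D, u y * v y) := by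
    rw [Finset.sum_mul_sum]
    exact Finset.sum_congr rfl fun x _ => Finset.sum_congr rfl fun y _ => by ring
  have c3 : (∑ x : Fin D, ∑ y : Fin D, u x * u y * (v y * v x))
      = (∑ x : Fin D, u x * v x) * (∑ y : Fin D, u y * v y) := by
    rw [Finset.sum_mul_sum]
    exact Finset.sum_congr rfl fun x _ => Finset.sum_congr rfl fun y _ => by ring
  have c4 : (∑ x : Fin D, u x * u x * (v x * v x) * (s - 3))
      = (s - 3) * ∑ x : Fin D, u x ^ 2 * v x ^ 2 := by
    rw [Finset.mul_sum]
    exact Finset.sum_congr rfl fun x _ => by ring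
  have c5a : (∑ i : Fin D, ∑ j : Fin D, u i ^ 2 * v j ^ 2)
      = (∑ x : Fin D, u x ^ 2) * (∑ y : Fin D, v y ^ 2) := by
    rw [Finset.sum_mul_sum]
  have c5b : (∑ i : Fin D, ∑ j : Fin D, 2 * (u i * v i) * (u j * v j))
      = 2 * ((∑ x : Fin D, u x * v x) * (∑ y : Fin D, u y * v y)) := by
    rw [Finset.sum_mul_sum, Finset.mul_sum]
    refine Finset.sum_congr rfl fun x _ => ?_
    rw [Finset.mul_sum]
    exact Finset.sum_congr rfl fun y _ => by ring
  have c5 : (∑ i : Fin D, ∑ j : Fin D, (u i ^ 2 * v j ^ 2 + 2 * (u i * v i) * (u j * v j)))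
      = (∑ x : Fin D, u x ^ 2) * (∑ y : Fin D, v y ^ 2)
        + 2 * ((∑ x : Fin D, u x * v x) * (∑ y : Fin D, u y * v y)) := by
    simp only [Finset.sum_add_distrib]
    rw [c5a, c5b]
  have c6 : (∑ i : Fin D, (u i ^ 2 * v i ^ 2 + 2 * (u i * v i) * (u i * v i)))
      = 3 * ∑ i : Fin D, u i ^ 2 * v i ^ 2 := by
    rw [Finset.mul_sum]
    exact Finset.sum_congr rfl fun i _ => by ring
  rw [c1, c2, c3, c4, c5, c6]
  ring
end
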